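/- arXiv:1011.0366 — 4 statements merged into one kernel-verified Lean document; each statement's English description precedes it below -/
import Mathlib

section
/- The number of standard Young tableaux of shifted shape λ = (λ1, ..., λm) with λ1 > λ2 > ... > λm > 0 equals |λ|! divided by the product of λi!, times the product over 1 ≤ i < j ≤ m of (λi - λj)/(λi + λj). -/
open Finset

/-- Cells of the ordinary Young diagram with row lengths given by the list `L`
(row `i`, columns `0,…,L_i-1`). -/
def shapeCells (L : List ℕ) : Finset (ℕ × ℕ) :=
  (Finset.range L.length).biUnion fun i =>
    (Finset.range (L.getD i 0)).image fun j => (i, j)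

/-- Cells of the shifted Young diagram with row lengths `L` (row `i` indented `i` places). -/
def shiftedCells (L : List ℕ) : Finset (ℕ × ℕ) :=
  (Finset.range L.length).biUnion fun i =>
    (Finset.range (L.getD i 0)).image fun j => (i, i + j)

/-- `T` is a standard Young tableau filling of the cell set `S`: a bijection onto
`{1,…,|S|}`, zero outside `S`, increasing along rows and down columns. -/
def IsSYT (S : Finset (ℕ × ℕ)) (T : ℕ × ℕ → ℕ) : Prop :=
  Set.BijOn T ↑S (Set.Icc 1 S.card) ∧ (∀ c, c ∉ S → T c = 0) ∧
  (∀ c ∈ S, (c.1, c.2 + 1) ∈ S → T c < T (c.1, c.2 + 1)) ∧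
  (∀ c ∈ S, (c.1 + 1, c.2) ∈ S → T c < T (c.1 + 1, c.2))

/-- A standard Young tableau which moreover increases down the main diagonal. -/
def IsSYTD (S : Finset (ℕ × ℕ)) (T : ℕ × ℕ → ℕ) : Prop :=
  IsSYT S T ∧ ∀ c ∈ S, c.1 = c.2 → (c.1 + 1, c.2 + 1) ∈ S → T c < T (c.1 + 1, c.2 + 1)

/-- The number of standard Young tableaux of a given cell set. -/
noncomputable def numSYT (S : Finset (ℕ × ℕ)) : ℕ :=
  Nat.card {T : ℕ × ℕ → ℕ // IsSYT S T}

/-- The number of standard Young tableaux (with the diagonal condition) of a cell set. -/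
noncomputable def numSYTD (S : Finset (ℕ × ℕ)) : ℕ :=
  Nat.card {T : ℕ × ℕ → ℕ // IsSYTD S T}

/-- The staircase list `(m, m-1, …, 1)`. -/
def stair (m : ℕ) : List ℕ := (List.range m).map fun i => m - i

/-- Sort a finite set of parts into a strictly decreasing list. -/
def sortDesc (s : Finset ℕ) : List ℕ := (s.sort (· ≤ ·)).reverse

/-- Number of SYT of the shifted shape whose set of parts is `s`. -/
noncomputable def gF (s : Finset ℕ) : ℕ := numSYT (shiftedCells (sortDesc s))

/-- Number of SYT of the ordinary shape with row lengths `L`. -/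
noncomputable def fL (L : List ℕ) : ℕ := numSYT (shapeCells L)

noncomputable def hg (s : Finset ℕ) : ℚ := (gF s : ℚ) / ((s.sum id).factorial : ℚ)

noncomputable def hf (L : List ℕ) : ℚ := (fL L : ℚ) / ((L.sum).factorial : ℚ)

/-- Superfactorial `F_j = 0! 1! ⋯ (j-1)!`. -/
def sf (j : ℕ) : ℕ := ∏ i ∈ Finset.range j, i.factorial

/-- The partition `μ + (c^k)`, as a list of `k` parts. -/
def addc (MU : List ℕ) (k c : ℕ) : List ℕ := (List.range k).map fun i => MU.getD i 0 + c

/-- The partition with `m` parts whose associated strict partition `λ + (m,…,1)`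
has set of parts `s`. -/
def partOf (m : ℕ) (s : Finset ℕ) : List ℕ :=
  (List.range m).map fun i => (sortDesc s).getD i 0 - (m - i)


-- ===== auxiliary development =====

lemma syt_finite (S : Finset (ℕ × ℕ)) : Finite {T : ℕ × ℕ → ℕ // IsSYT S T} := by
  classical
  have : Function.Injective
      (fun T : {T : ℕ × ℕ → ℕ // IsSYT S T} => fun c : ↥S => T.1 c.1) := by
    rintro ⟨T, hT⟩ ⟨T', hT'⟩ h
    ext c
    show T c = T' c
    by_cases hc : c ∈ S
    · exact congrFun h ⟨c, hc⟩
    · rw [hT.2.1 c hc, hT'.2.1 c hc]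
  have : Function.Injective
      (fun T : {T : ℕ × ℕ → ℕ // IsSYT S T} =>
        fun c : ↥S => (⟨T.1 c.1, by
          have := T.2.1.1 c.2
          simp only [Set.mem_Icc] at this
          omega⟩ : Fin (S.card + 1))) := by
    intro T T' h
    apply this
    funext c
    exact congrArg Fin.val (congrFun h c)
  exact Finite.of_injective _ this

lemma numSYT_empty : numSYT ∅ = 1 := by
  rw [numSYT, Nat.card_eq_one_iff_unique]
  constructor
  · constructor
    rintro ⟨T, hT⟩ ⟨T', hT'⟩
    ext c
    show T c = T' c
    rw [hT.2.1 c (Finset.notMem_empty c), hT'.2.1 c (Finset.notMem_empty c)]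
  · refine ⟨fun _ => 0, ?_, fun c _ => rfl, fun c hc => by simp at hc, fun c hc => by simp at hc⟩
    have h0 : Set.Icc (1:ℕ) (∅ : Finset (ℕ × ℕ)).card = ∅ := by
      simp
    rw [h0, Finset.coe_empty]
    exact Set.bijOn_empty _

def corners (S : Finset (ℕ × ℕ)) : Finset (ℕ × ℕ) :=
  S.filter (fun c => (c.1, c.2 + 1) ∉ S ∧ (c.1 + 1, c.2) ∉ S)

section rec
variable {S : Finset (ℕ × ℕ)}

/-- extending an SYT of `S.erase c` by placing `S.card` at a corner `c` gives an SYT of `S`. -/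
lemma extend_syt (hc : c ∈ corners S) {T : ℕ × ℕ → ℕ} (hT : IsSYT (S.erase c) T) :
    IsSYT S (Function.update T c S.card) := by
  obtain ⟨hcS, hr, hb⟩ := Finset.mem_filter.mp hc
  have hcard : (S.erase c).card = S.card - 1 := Finset.card_erase_of_mem hcS
  have hn : 1 ≤ S.card := Finset.card_pos.mpr ⟨c, hcS⟩
  have hval : ∀ d ∈ S.erase c, 1 ≤ T d ∧ T d ≤ S.card - 1 := by
    intro d hd
    have := hT.1.1 (by exact_mod_cast hd)
    rw [hcard] at this
    exact Set.mem_Icc.mp this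
  have hTc : T c = 0 := hT.2.1 c (Finset.notMem_erase c S)
  have key : ∀ d ∈ S, d ≠ c → Function.update T c S.card d = T d :=
    fun d _ hd => Function.update_of_ne hd _ _
  refine ⟨⟨?_, ?_, ?_⟩, ?_, ?_, ?_⟩
  · -- MapsTo
    intro d hd
    by_cases h : d = c
    · subst h; simp [Set.mem_Icc, hn]
    · rw [Function.update_of_ne h]
      have := hval d (Finset.mem_erase.mpr ⟨h, by exact_mod_cast hd⟩)
      simp only [Set.mem_Icc]; omega
  · -- InjOn
    intro d1 h1 d2 h2 he
    by_cases e1 : d1 = c <;> by_cases e2 : d2 = c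
    · rw [e1, e2]
    · exfalso
      rw [e1, Function.update_self, Function.update_of_ne e2] at he
      have := hval d2 (Finset.mem_erase.mpr ⟨e2, by exact_mod_cast h2⟩)
      omega
    · exfalso
      rw [e2, Function.update_self, Function.update_of_ne e1] at he
      have := hval d1 (Finset.mem_erase.mpr ⟨e1, by exact_mod_cast h1⟩)
      omega
    · rw [Function.update_of_ne e1, Function.update_of_ne e2] at he
      exact hT.1.2.1 (by simp [Finset.mem_coe, Finset.mem_erase, e1]; exact_mod_cast h1)
        (by simp [Finset.mem_coe, Finset.mem_erase, e2]; exact_mod_cast h2) he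
  · -- SurjOn
    intro k hk
    simp only [Set.mem_Icc] at hk
    by_cases hkn : k = S.card
    · exact ⟨c, by exact_mod_cast hcS, by rw [Function.update_self, hkn]⟩
    · have : k ∈ Set.Icc 1 (S.erase c).card := by rw [hcard]; simp only [Set.mem_Icc]; omega
      obtain ⟨d, hd, hdk⟩ := hT.1.2.2 this
      have hdc : d ≠ c := by
        intro h; rw [h] at hdk; rw [hTc] at hdk; omega
      refine ⟨d, ?_, ?_⟩
      · have := Finset.mem_erase.mp (by exact_mod_cast hd)
        exact_mod_cast this.2
      · rwa [Function.update_of_ne hdc]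
  · -- zero outside
    intro d hd
    have hdc : d ≠ c := fun h => hd (h ▸ hcS)
    rw [Function.update_of_ne hdc]
    exact hT.2.1 d (fun h => hd (Finset.mem_of_mem_erase h))
  · -- rows
    intro d hd hd'
    by_cases e1 : d = c
    · exact absurd (e1 ▸ hd') hr
    · rw [Function.update_of_ne e1]
      by_cases e2 : (d.1, d.2 + 1) = c
      · rw [e2, Function.update_self]
        have := hval d (Finset.mem_erase.mpr ⟨e1, hd⟩)
        omega
      · rw [Function.update_of_ne e2]
        exact hT.2.2.1 d (Finset.mem_erase.mpr ⟨e1, hd⟩) (Finset.mem_erase.mpr ⟨e2, hd'⟩)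
  · -- columns
    intro d hd hd'
    by_cases e1 : d = c
    · exact absurd (e1 ▸ hd') hb
    · rw [Function.update_of_ne e1]
      by_cases e2 : (d.1 + 1, d.2) = c
      · rw [e2, Function.update_self]
        have := hval d (Finset.mem_erase.mpr ⟨e1, hd⟩)
        omega
      · rw [Function.update_of_ne e2]
        exact hT.2.2.2 d (Finset.mem_erase.mpr ⟨e1, hd⟩) (Finset.mem_erase.mpr ⟨e2, hd'⟩)

/-- restricting an SYT of `S` by removing the maximal entry gives an SYT of the erase. -/
lemma restrict_syt {T : ℕ × ℕ → ℕ} (hT : IsSYT S T) (hcS : c ∈ S) (hv : T c = S.card) :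
    IsSYT (S.erase c) (Function.update T c 0) := by
  have hcard : (S.erase c).card = S.card - 1 := Finset.card_erase_of_mem hcS
  have hn : 1 ≤ S.card := Finset.card_pos.mpr ⟨c, hcS⟩
  have hval : ∀ d ∈ S, 1 ≤ T d ∧ T d ≤ S.card := by
    intro d hd
    exact Set.mem_Icc.mp (hT.1.1 (by exact_mod_cast hd))
  have hne : ∀ d ∈ S, d ≠ c → T d ≠ S.card := by
    intro d hd hdc he
    exact hdc (hT.1.2.1 (by exact_mod_cast hd) (by exact_mod_cast hcS) (by rw [he, hv]))
  refine ⟨⟨?_, ?_, ?_⟩, ?_, ?_, ?_⟩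
  · intro d hd
    rw [Finset.coe_erase, Set.mem_diff] at hd
    obtain ⟨hd1, hd2⟩ := hd
    have hdc : d ≠ c := by simpa using hd2
    rw [Function.update_of_ne hdc, hcard]
    have h1 := hval d (by exact_mod_cast hd1)
    have h2 := hne d (by exact_mod_cast hd1) hdc
    simp only [Set.mem_Icc]; omega
  · intro d1 h1 d2 h2 he
    rw [Finset.coe_erase, Set.mem_diff] at h1 h2
    have e1 : d1 ≠ c := by simpa using h1.2
    have e2 : d2 ≠ c := by simpa using h2.2
    rw [Function.update_of_ne e1, Function.update_of_ne e2] at he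
    exact hT.1.2.1 h1.1 h2.1 he
  · intro k hk
    rw [hcard] at hk
    simp only [Set.mem_Icc] at hk
    obtain ⟨d, hd, hdk⟩ := hT.1.2.2 (Set.mem_Icc.mpr ⟨hk.1, by omega⟩ : k ∈ Set.Icc 1 S.card)
    have hdc : d ≠ c := by
      intro h; rw [h, hv] at hdk; omega
    exact ⟨d, by rw [Finset.coe_erase, Set.mem_diff]; exact ⟨hd, by simpa using hdc⟩,
      by rwa [Function.update_of_ne hdc]⟩
  · intro d hd
    by_cases hdc : d = c
    · rw [hdc, Function.update_self]
    · rw [Function.update_of_ne hdc]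
      exact hT.2.1 d (fun h => hd (Finset.mem_erase.mpr ⟨hdc, h⟩))
  · intro d hd hd'
    have h1 := Finset.mem_erase.mp hd
    have h2 := Finset.mem_erase.mp hd'
    rw [Function.update_of_ne h1.1, Function.update_of_ne h2.1]
    exact hT.2.2.1 d h1.2 h2.2
  · intro d hd hd'
    have h1 := Finset.mem_erase.mp hd
    have h2 := Finset.mem_erase.mp hd'
    rw [Function.update_of_ne h1.1, Function.update_of_ne h2.1]
    exact hT.2.2.2 d h1.2 h2.2

lemma max_is_corner {T : ℕ × ℕ → ℕ} (hT : IsSYT S T) (hcS : c ∈ S) (hv : T c = S.card) :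
    c ∈ corners S := by
  have hval : ∀ d ∈ S, 1 ≤ T d ∧ T d ≤ S.card := fun d hd =>
    Set.mem_Icc.mp (hT.1.1 (by exact_mod_cast hd))
  refine Finset.mem_filter.mpr ⟨hcS, ?_, ?_⟩
  · intro h
    have := hT.2.2.1 c hcS h
    have := hval _ h
    omega
  · intro h
    have := hT.2.2.2 c hcS h
    have := hval _ h
    omega

lemma numSYT_rec (hS : S.Nonempty) :
    numSYT S = ∑ c ∈ corners S, numSYT (S.erase c) := by
  classical
  have hn : 1 ≤ S.card := Finset.card_pos.mpr hS
  haveI : ∀ c : ↥(corners S), Finite {T : ℕ × ℕ → ℕ // IsSYT (S.erase c.1) T} :=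
    fun c => syt_finite _
  letI : ∀ c : ↥(corners S), Fintype {T : ℕ × ℕ → ℕ // IsSYT (S.erase c.1) T} :=
    fun c => Fintype.ofFinite _
  haveI : Finite {T : ℕ × ℕ → ℕ // IsSYT S T} := syt_finite S
  letI : Fintype {T : ℕ × ℕ → ℕ // IsSYT S T} := Fintype.ofFinite _
  set B : (Σ c : ↥(corners S), {T : ℕ × ℕ → ℕ // IsSYT (S.erase c.1) T}) →
      {T : ℕ × ℕ → ℕ // IsSYT S T} :=
    fun p => ⟨Function.update p.2.1 p.1.1 S.card, extend_syt p.1.2 p.2.2⟩ with hB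
  have hbij : Function.Bijective B := by
    constructor
    · rintro ⟨⟨c1, hc1⟩, ⟨T1, hT1⟩⟩ ⟨⟨c2, hc2⟩, ⟨T2, hT2⟩⟩ h
      simp only [hB, Subtype.mk.injEq] at h
      have hc12 : c1 = c2 := by
        by_contra hne
        have e1 := congrFun h c1
        rw [Function.update_self, Function.update_of_ne hne] at e1
        have hc1S : c1 ∈ S.erase c2 := Finset.mem_erase.mpr ⟨hne,
          (Finset.mem_filter.mp hc1).1⟩
        have := Set.mem_Icc.mp (hT2.1.1 (by exact_mod_cast hc1S))
        rw [Finset.card_erase_of_mem (Finset.mem_filter.mp hc2).1] at this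
        omega
      subst hc12
      have hT12 : T1 = T2 := by
        funext d
        by_cases hdc : d = c1
        · rw [hdc, hT1.2.1 c1 (Finset.notMem_erase c1 S), hT2.2.1 c1 (Finset.notMem_erase c1 S)]
        · have := congrFun h d
          rwa [Function.update_of_ne hdc, Function.update_of_ne hdc] at this
      subst hT12
      rfl
    · rintro ⟨T, hT⟩
      obtain ⟨c, hcS, hv⟩ := hT.1.2.2 (Set.mem_Icc.mpr ⟨hn, le_refl _⟩ : S.card ∈ Set.Icc 1 S.card)
      have hcS' : c ∈ S := by exact_mod_cast hcS
      refine ⟨⟨⟨c, max_is_corner hT hcS' hv⟩, ⟨Function.update T c 0, restrict_syt hT hcS' hv⟩⟩, ?_⟩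
      simp only [hB, Subtype.mk.injEq]
      funext d
      by_cases hdc : d = c
      · rw [hdc, Function.update_self, hv]
      · rw [Function.update_of_ne hdc, Function.update_of_ne hdc]
  have := Nat.card_eq_of_bijective B hbij
  rw [numSYT, ← this, Nat.card_eq_fintype_card, Fintype.card_sigma]
  rw [← Finset.sum_coe_sort (corners S) (fun c => numSYT (S.erase c))]
  congr 1
  funext c
  rw [numSYT, Nat.card_eq_fintype_card]

end rec

/-- shifted cells, function version -/
def cells (m : ℕ) (f : ℕ → ℕ) : Finset (ℕ × ℕ) :=
  (Finset.range m).biUnion fun i => (Finset.range (f i)).image fun j => (i, i + j)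

lemma mem_cells {m : ℕ} {f : ℕ → ℕ} {c : ℕ × ℕ} :
    c ∈ cells m f ↔ c.1 < m ∧ c.1 ≤ c.2 ∧ c.2 < c.1 + f c.1 := by
  obtain ⟨a, b⟩ := c
  simp only [cells, mem_biUnion, mem_range, mem_image, Prod.mk.injEq]
  constructor
  · rintro ⟨i, hi, j, hj, rfl, rfl⟩
    omega
  · rintro ⟨h1, h2, h3⟩
    exact ⟨a, h1, b - a, by omega, rfl, by omega⟩

lemma card_cells (m : ℕ) (f : ℕ → ℕ) : (cells m f).card = ∑ i ∈ Finset.range m, f i := by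
  rw [cells, Finset.card_biUnion]
  · refine Finset.sum_congr rfl fun i _ => ?_
    rw [Finset.card_image_of_injective, Finset.card_range]
    intro x y h
    simpa using h
  · intro i _ j _ hij
    simp only [Finset.disjoint_left, mem_image, mem_range]
    rintro ⟨a, b⟩ ⟨u, hu, hc⟩ ⟨v, hv, hc'⟩
    obtain ⟨rfl, -⟩ := Prod.mk.injEq .. ▸ hc
    obtain ⟨rfl, -⟩ := Prod.mk.injEq .. ▸ hc'
    exact hij rfl

lemma cells_congr {m : ℕ} {f g : ℕ → ℕ} (h : ∀ i < m, f i = g i) : cells m f = cells m g := by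
  ext c
  simp only [mem_cells]
  constructor <;> rintro ⟨h1, h2, h3⟩ <;> exact ⟨h1, h2, by rw [h c.1 h1] at *; omega⟩

lemma cells_last_zero {m : ℕ} {f : ℕ → ℕ} (h : f m = 0) : cells (m + 1) f = cells m f := by
  ext c
  simp only [mem_cells]
  constructor <;> rintro ⟨h1, h2, h3⟩
  · refine ⟨?_, h2, h3⟩
    rcases Nat.lt_succ_iff_lt_or_eq.mp h1 with h | h
    · exact h
    · rw [h] at h3 ⊢; omega
  · exact ⟨by omega, h2, h3⟩

section corner
variable {m : ℕ} {f : ℕ → ℕ}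
  (hstrict : ∀ i j, i < j → j < m → f j < f i)
  (hpos : ∀ i, i < m → 0 < f i)

/-- removable rows -/
def rows (m : ℕ) (f : ℕ → ℕ) : Finset ℕ :=
  (Finset.range m).filter fun i => i + 1 < m → f (i + 1) + 1 < f i

include hstrict hpos in
lemma corners_cells : corners (cells m f) = (rows m f).image fun i => (i, i + f i - 1) := by
  ext ⟨a, b⟩
  simp only [corners, rows, Finset.mem_filter, mem_cells, mem_image, mem_range]
  constructor
  · rintro ⟨⟨h1, h2, h3⟩, hr, hb⟩
    have hfa : 0 < f a := hpos a h1
    refine ⟨a, ⟨h1, ?_⟩, ?_⟩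
    · intro ha1
      have hlt : f (a + 1) < f a := hstrict a (a + 1) (by omega) ha1
      have hfa1 : 0 < f (a + 1) := hpos _ ha1
      -- b = a + f a - 1 from hr
      have hb' : b = a + f a - 1 := by
        by_contra hne
        exact hr ⟨h1, by omega, by omega⟩
      -- below cell not in S
      by_contra hcon
      push_neg at hcon
      exact hb ⟨ha1, by omega, by omega⟩
    · have hb' : b = a + f a - 1 := by
        by_contra hne
        exact hr ⟨h1, by omega, by omega⟩
      simp [hb']
  · rintro ⟨i, ⟨hi, hcor⟩, he⟩
    have hfi : 0 < f i := hpos i hi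
    obtain ⟨rfl, rfl⟩ := Prod.mk.injEq .. ▸ he
    refine ⟨⟨hi, by omega, by omega⟩, ?_, ?_⟩
    · rintro ⟨-, -, h3⟩
      omega
    · rintro ⟨h1, h2, h3⟩
      have := hcor h1
      omega

include hstrict hpos in
lemma erase_cells {i : ℕ} (hi : i ∈ rows m f) :
    (cells m f).erase (i, i + f i - 1) = cells m (Function.update f i (f i - 1)) := by
  obtain ⟨hi', hcor⟩ := Finset.mem_filter.mp hi
  rw [Finset.mem_range] at hi'
  have hfi : 0 < f i := hpos i hi'
  ext ⟨a, b⟩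
  simp only [Finset.mem_erase, mem_cells, Function.update_apply, Prod.mk.injEq, ne_eq, not_and]
  constructor
  · rintro ⟨hne, h1, h2, h3⟩
    by_cases hai : a = i
    · subst hai
      simp only [if_pos rfl, if_true]
      refine ⟨h1, h2, ?_⟩
      have hne' : b ≠ a + f a - 1 := hne rfl
      omega
    · simp only [if_neg hai]
      exact ⟨h1, h2, h3⟩
  · by_cases hai : a = i
    · subst hai
      simp only [if_pos rfl, if_true]
      rintro ⟨h1, h2, h3⟩
      exact ⟨fun _ => by omega, h1, h2, by omega⟩
    · simp only [if_neg hai]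
      rintro ⟨h1, h2, h3⟩
      exact ⟨fun h => absurd h hai, h1, h2, h3⟩

end corner

section Alg
open Polynomial
variable {F : Type*} [Field F] {ι : Type*} [DecidableEq ι]

lemma leadingCoeff_basisDivisor (x y : F) :
    (Lagrange.basisDivisor x y).leadingCoeff = (x - y)⁻¹ := by
  by_cases h : x = y
  · simp [h, Lagrange.basisDivisor_self]
  · rw [Lagrange.basisDivisor, leadingCoeff_mul, leadingCoeff_C,
      (monic_X_sub_C y).leadingCoeff, mul_one]

lemma coeff_basis {s : Finset ι} {v : ι → F} (hvs : Set.InjOn v s) {i : ι} (hi : i ∈ s) :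
    (Lagrange.basis s v i).coeff (s.card - 1) = (∏ j ∈ s.erase i, (v i - v j))⁻¹ := by
  have h1 : (Lagrange.basis s v i).natDegree = s.card - 1 := Lagrange.natDegree_basis hvs hi
  rw [← h1, coeff_natDegree, Lagrange.basis, leadingCoeff_prod, ← Finset.prod_inv_distrib]
  exact Finset.prod_congr rfl fun j _ => leadingCoeff_basisDivisor _ _

/-- divided difference of a polynomial of low degree equals its (#s-1)-th coefficient -/
lemma divided_diff {s : Finset ι} {v : ι → F} (hvs : Set.InjOn v s) {Q : F[X]}
    (hQ : Q.degree < s.card) :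
    ∑ i ∈ s, Q.eval (v i) * (∏ j ∈ s.erase i, (v i - v j))⁻¹ = Q.coeff (s.card - 1) := by
  conv_rhs => rw [Lagrange.eq_interpolate hvs hQ]
  rw [Lagrange.interpolate_apply, finset_sum_coeff]
  exact Finset.sum_congr rfl fun i hi => by rw [coeff_C_mul, coeff_basis hvs hi]

/-- divided difference of a monic nodal-type polynomial of degree #s -/
lemma divided_diff_nodal {s : Finset ι} (hs : s.Nonempty) {u : ι → F} (hu : Set.InjOn u s)
    (w : ι → F) :
    ∑ i ∈ s, (∏ j ∈ s, (u i - w j)) * (∏ j ∈ s.erase i, (u i - u j))⁻¹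
      = ∑ i ∈ s, u i - ∑ j ∈ s, w j := by
  set P : F[X] := ∏ j ∈ s, (X - C (w j)) with hP
  set N : F[X] := ∏ j ∈ s, (X - C (u j)) with hN
  have hPm : P.Monic := monic_prod_of_monic _ _ fun j _ => monic_X_sub_C _
  have hNm : N.Monic := monic_prod_of_monic _ _ fun j _ => monic_X_sub_C _
  have hPd : P.natDegree = s.card := by
    rw [hP, natDegree_prod _ _ fun j _ => X_sub_C_ne_zero _]
    simp [natDegree_X_sub_C]
  have hNd : N.natDegree = s.card := by
    rw [hN, natDegree_prod _ _ fun j _ => X_sub_C_ne_zero _]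
    simp [natDegree_X_sub_C]
  have hdeg : (P - N).degree < s.card := by
    have hd : P.degree = N.degree := by
      rw [degree_eq_natDegree hPm.ne_zero, degree_eq_natDegree hNm.ne_zero, hPd, hNd]
    have hlc : P.leadingCoeff = N.leadingCoeff := by
      rw [Monic.leadingCoeff hPm, Monic.leadingCoeff hNm]
    have := degree_sub_lt hd hPm.ne_zero hlc
    rwa [degree_eq_natDegree hPm.ne_zero, hPd] at this
  have key := divided_diff hu hdeg
  have heval : ∀ i ∈ s, (P - N).eval (u i) = ∏ j ∈ s, (u i - w j) := by
    intro i hi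
    rw [eval_sub]
    have hN0 : N.eval (u i) = 0 := by
      rw [hN, eval_prod]
      exact Finset.prod_eq_zero hi (by simp)
    rw [hN0, sub_zero, hP, eval_prod]
    exact Finset.prod_congr rfl fun j _ => by simp
  have hsum : ∑ i ∈ s, (∏ j ∈ s, (u i - w j)) * (∏ j ∈ s.erase i, (u i - u j))⁻¹
      = ∑ i ∈ s, (P - N).eval (u i) * (∏ j ∈ s.erase i, (u i - u j))⁻¹ :=
    Finset.sum_congr rfl fun i hi => by rw [heval i hi]
  rw [hsum, key]
  have hcoeffP : P.coeff (s.card - 1) = -∑ j ∈ s, w j := by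
    have := prod_X_sub_C_nextCoeff (s := s) (f := w)
    rwa [nextCoeff_of_natDegree_pos (by rw [hPd]; exact hs.card_pos), hPd] at this
  have hcoeffN : N.coeff (s.card - 1) = -∑ j ∈ s, u j := by
    have := prod_X_sub_C_nextCoeff (s := s) (f := u)
    rwa [nextCoeff_of_natDegree_pos (by rw [hNd]; exact hs.card_pos), hNd] at this
  rw [coeff_sub, hcoeffP, hcoeffN]
  ring

/-- Schur's rational identity -/
lemma schur_identity [CharZero F] {s : Finset ι} (hs : s.Nonempty) (x : ι → F)
    (hx : ∀ i ∈ s, x i ≠ 0)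
    (hu : Set.InjOn (fun i => x i * (x i - 1)) s) :
    ∑ i ∈ s, x i * ∏ j ∈ s.erase i,
        ((x i * (x i - 1) - x j * (x j + 1)) * (x i * (x i - 1) - x j * (x j - 1))⁻¹)
      = ∑ i ∈ s, x i := by
  set u : ι → F := fun i => x i * (x i - 1) with hu'
  set w : ι → F := fun i => x i * (x i + 1) with hw'
  have key := divided_diff_nodal hs hu w
  have hterm : ∀ i ∈ s, x i * ∏ j ∈ s.erase i, ((u i - w j) * (u i - u j)⁻¹)
      = (-2)⁻¹ * ((∏ j ∈ s, (u i - w j)) * (∏ j ∈ s.erase i, (u i - u j))⁻¹) := by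
    intro i hi
    rw [Finset.prod_mul_distrib, ← Finset.mul_prod_erase s (fun j => u i - w j) hi]
    have huw : u i - w i = -2 * x i := by rw [hu', hw']; ring
    rw [huw, Finset.prod_inv_distrib]
    have h2 : (-2 : F) ≠ 0 := by norm_num
    field_simp
  rw [Finset.sum_congr rfl hterm, ← Finset.mul_sum, key]
  have : ∑ i ∈ s, u i - ∑ j ∈ s, w j = -2 * ∑ i ∈ s, x i := by
    rw [← Finset.sum_sub_distrib, Finset.mul_sum]
    exact Finset.sum_congr rfl fun i _ => by rw [hu', hw']; ring
  rw [this]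
  field_simp

end Alg

/-- factorial product -/
noncomputable def Fct (m : ℕ) (f : ℕ → ℕ) : ℚ := ∏ i ∈ Finset.range m, ((f i).factorial : ℚ)

/-- pair differences -/
noncomputable def PD (m : ℕ) (f : ℕ → ℕ) : ℚ :=
  ∏ a ∈ Finset.range m, ∏ b ∈ Finset.Ioo a m, ((f a : ℚ) - (f b : ℚ))

/-- pair sums -/
noncomputable def PS (m : ℕ) (f : ℕ → ℕ) : ℚ :=
  ∏ a ∈ Finset.range m, ∏ b ∈ Finset.Ioo a m, ((f a : ℚ) + (f b : ℚ))

lemma erase_range_eq (i m : ℕ) (him : i < m) :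
    (Finset.range m).erase i = Finset.range i ∪ Finset.Ioo i m := by
  ext a
  simp only [mem_erase, mem_range, mem_union, mem_Ioo]
  omega

lemma prod_erase_range (i m : ℕ) (him : i < m) (h : ℕ → ℚ) :
    ∏ j ∈ (Finset.range m).erase i, h j
      = (∏ j ∈ Finset.range i, h j) * ∏ j ∈ Finset.Ioo i m, h j := by
  rw [erase_range_eq i m him, Finset.prod_union]
  simp only [Finset.disjoint_left, mem_range, mem_Ioo]
  omega

/-- split of the double product over pairs at index i -/
lemma double_prod_split {m i : ℕ} (him : i < m) (G : ℕ → ℕ → ℚ) :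
    ∏ a ∈ Finset.range m, ∏ b ∈ Finset.Ioo a m, G a b
      = ((∏ a ∈ Finset.range i, G a i) * ∏ b ∈ Finset.Ioo i m, G i b) *
          ∏ a ∈ (Finset.range m).erase i, ∏ b ∈ (Finset.Ioo a m).erase i, G a b := by
  rw [← Finset.mul_prod_erase (Finset.range m) _ (Finset.mem_range.mpr him)]
  have hIoo : (Finset.Ioo i m).erase i = Finset.Ioo i m :=
    Finset.erase_eq_of_notMem (by simp)
  have hstep : ∀ a ∈ (Finset.range m).erase i,
      ∏ b ∈ Finset.Ioo a m, G a b
        = (if a < i then G a i else 1) * ∏ b ∈ (Finset.Ioo a m).erase i, G a b := by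
    intro a ha
    obtain ⟨hai, ham⟩ := Finset.mem_erase.mp ha
    rw [Finset.mem_range] at ham
    by_cases h : a < i
    · rw [if_pos h, Finset.mul_prod_erase (Finset.Ioo a m) _ (Finset.mem_Ioo.mpr ⟨h, him⟩)]
    · rw [if_neg h, one_mul, Finset.erase_eq_of_notMem]
      simp only [Finset.mem_Ioo]
      omega
  rw [Finset.prod_congr rfl hstep, Finset.prod_mul_distrib]
  have hsub : Finset.range i ⊆ (Finset.range m).erase i := by
    intro a ha
    rw [Finset.mem_range] at ha
    simp only [Finset.mem_erase, Finset.mem_range]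
    omega
  have hite : ∏ a ∈ (Finset.range m).erase i, (if a < i then G a i else 1)
      = ∏ a ∈ Finset.range i, G a i := by
    calc ∏ a ∈ (Finset.range m).erase i, (if a < i then G a i else 1)
        = ∏ a ∈ Finset.range i, (if a < i then G a i else 1) :=
          (Finset.prod_subset hsub fun a _ ha =>
            if_neg (fun h => ha (Finset.mem_range.mpr h))).symm
      _ = ∏ a ∈ Finset.range i, G a i :=
          Finset.prod_congr rfl fun a ha => if_pos (Finset.mem_range.mp ha)
  rw [hite]
  ring

lemma double_prod_update {m i : ℕ} (him : i < m) (f : ℕ → ℕ) (c : ℕ) (g : ℚ → ℚ → ℚ) :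
    (∏ a ∈ Finset.range m, ∏ b ∈ Finset.Ioo a m,
        g ((Function.update f i c a : ℕ) : ℚ) ((Function.update f i c b : ℕ) : ℚ)) *
      ((∏ a ∈ Finset.range i, g (f a : ℚ) (f i : ℚ)) * ∏ b ∈ Finset.Ioo i m, g (f i : ℚ) (f b : ℚ))
    = (∏ a ∈ Finset.range m, ∏ b ∈ Finset.Ioo a m, g (f a : ℚ) (f b : ℚ)) *
      ((∏ a ∈ Finset.range i, g (f a : ℚ) (c : ℚ)) * ∏ b ∈ Finset.Ioo i m, g (c : ℚ) (f b : ℚ)) := by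
  rw [double_prod_split him (fun a b => g ((Function.update f i c a : ℕ) : ℚ)
    ((Function.update f i c b : ℕ) : ℚ)), double_prod_split him (fun a b => g (f a : ℚ) (f b : ℚ))]
  have h3 : ∀ a ∈ (Finset.range m).erase i, ∏ b ∈ (Finset.Ioo a m).erase i,
      g ((Function.update f i c a : ℕ) : ℚ) ((Function.update f i c b : ℕ) : ℚ)
      = ∏ b ∈ (Finset.Ioo a m).erase i, g (f a : ℚ) (f b : ℚ) := by
    intro a ha
    refine Finset.prod_congr rfl fun b hb => ?_
    rw [Function.update_of_ne (Finset.mem_erase.mp ha).1, Function.update_of_ne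
      (Finset.mem_erase.mp hb).1]
  rw [Finset.prod_congr rfl h3]
  have h1 : ∀ a ∈ Finset.range i,
      g ((Function.update f i c a : ℕ) : ℚ) ((Function.update f i c i : ℕ) : ℚ)
        = g (f a : ℚ) (c : ℚ) := by
    intro a ha
    have hne : a ≠ i := by rw [Finset.mem_range] at ha; omega
    rw [Function.update_of_ne hne, Function.update_self]
  have h2 : ∀ b ∈ Finset.Ioo i m,
      g ((Function.update f i c i : ℕ) : ℚ) ((Function.update f i c b : ℕ) : ℚ)
        = g (c : ℚ) (f b : ℚ) := by
    intro b hb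
    have hne : b ≠ i := by rw [Finset.mem_Ioo] at hb; omega
    rw [Function.update_self, Function.update_of_ne hne]
  rw [Finset.prod_congr rfl h1, Finset.prod_congr rfl h2]
  ring

lemma double_prod_last_zero (k : ℕ) (G : ℕ → ℕ → ℚ) :
    ∏ a ∈ Finset.range (k+1), ∏ b ∈ Finset.Ioo a (k+1), G a b
      = (∏ a ∈ Finset.range k, ∏ b ∈ Finset.Ioo a k, G a b) * ∏ a ∈ Finset.range k, G a k := by
  rw [Finset.prod_range_succ]
  have h0 : Finset.Ioo k (k+1) = ∅ := by
    ext b; simp only [Finset.mem_Ioo, Finset.notMem_empty, iff_false]; omega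
  rw [h0, Finset.prod_empty, mul_one]
  have hins : ∀ a ∈ Finset.range k, ∏ b ∈ Finset.Ioo a (k+1), G a b
      = (∏ b ∈ Finset.Ioo a k, G a b) * G a k := by
    intro a ha
    rw [Finset.mem_range] at ha
    have : Finset.Ioo a (k+1) = insert k (Finset.Ioo a k) := by
      ext b; simp only [Finset.mem_Ioo, Finset.mem_insert]; omega
    rw [this, Finset.prod_insert (by simp)]
    ring
  rw [Finset.prod_congr rfl hins, Finset.prod_mul_distrib]

lemma Fct_last_zero {k : ℕ} {f : ℕ → ℕ} (h : f k = 0) : Fct (k+1) f = Fct k f := by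
  rw [Fct, Fct, Finset.prod_range_succ, h]
  simp

lemma PD_last_zero {k : ℕ} {f : ℕ → ℕ} (h : f k = 0) :
    PD (k+1) f = PD k f * ∏ a ∈ Finset.range k, (f a : ℚ) := by
  rw [PD, PD, double_prod_last_zero, h]
  simp

lemma PS_last_zero {k : ℕ} {f : ℕ → ℕ} (h : f k = 0) :
    PS (k+1) f = PS k f * ∏ a ∈ Finset.range k, (f a : ℚ) := by
  rw [PS, PS, double_prod_last_zero, h]
  simp

lemma Fct_ne_zero (m : ℕ) (f : ℕ → ℕ) : Fct m f ≠ 0 := by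
  rw [Fct, Finset.prod_ne_zero_iff]
  intro i _
  exact_mod_cast (f i).factorial_ne_zero

lemma PS_ne_zero {m : ℕ} {f : ℕ → ℕ} (hstrict : ∀ i j, i < j → j < m → f j < f i) :
    PS m f ≠ 0 := by
  rw [PS, Finset.prod_ne_zero_iff]
  intro a ha
  rw [Finset.prod_ne_zero_iff]
  intro b hb
  rw [Finset.mem_range] at ha
  rw [Finset.mem_Ioo] at hb
  have := hstrict a b hb.1 hb.2
  have : 0 < f a + f b := by omega
  exact_mod_cast ne_of_gt (by exact_mod_cast this : (0:ℚ) < (f a : ℚ) + f b)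

lemma child_strict {m i : ℕ} {f : ℕ → ℕ}
    (hstrict : ∀ a b, a < b → b < m → f b < f a) (hi : i ∈ rows m f) :
    ∀ a b, a < b → b < m → Function.update f i (f i - 1) b < Function.update f i (f i - 1) a := by
  obtain ⟨hi', hcond⟩ := Finset.mem_filter.mp hi
  rw [Finset.mem_range] at hi'
  intro a b hab hbm
  rw [Function.update_apply, Function.update_apply]
  by_cases hbi : b = i
  · subst hbi
    rw [if_pos rfl, if_neg (by omega)]
    have := hstrict a b hab hbm
    omega
  · rw [if_neg hbi]
    by_cases hai : a = i
    · subst hai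
      rw [if_pos rfl]
      have h2 : a + 1 < m := by omega
      have h3 := hcond h2
      rcases Nat.lt_or_ge (a+1) b with h | h
      · have := hstrict (a+1) b h hbm
        omega
      · have : b = a + 1 := by omega
        subst this
        omega
    · rw [if_neg hai]
      exact hstrict a b hab hbm

lemma sum_child {m i : ℕ} {f : ℕ → ℕ} (hi : i < m) :
    ∑ j ∈ Finset.range m, Function.update f i (f i - 1) j
      = (∑ j ∈ Finset.range m, f j) - 1 ∨ f i = 0 := by
  rcases Nat.eq_zero_or_pos (f i) with h | h
  · exact Or.inr h
  · left
    rw [Finset.sum_update_of_mem (Finset.mem_range.mpr hi), Finset.sdiff_singleton_eq_erase]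
    have := Finset.add_sum_erase (Finset.range m) f (Finset.mem_range.mpr hi)
    omega

section updates
variable {m i : ℕ} {f : ℕ → ℕ}

lemma prod_neg_form (i : ℕ) (h : ℕ → ℚ) (c : ℚ) :
    ∏ a ∈ Finset.range i, (c - h a) = (-1)^i * ∏ a ∈ Finset.range i, (h a - c) := by
  rw [show ((-1 : ℚ))^i = ∏ _a ∈ Finset.range i, (-1 : ℚ) by
    rw [Finset.prod_const, Finset.card_range], ← Finset.prod_mul_distrib]
  exact Finset.prod_congr rfl fun a _ => by ring

lemma PD_update (him : i < m) (c : ℕ) :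
    PD m (Function.update f i c) * ∏ j ∈ (Finset.range m).erase i, ((f i : ℚ) - f j)
      = PD m f * ∏ j ∈ (Finset.range m).erase i, ((c : ℚ) - f j) := by
  rw [prod_erase_range i m him, prod_erase_range i m him]
  have h := double_prod_update him f c (fun a b => a - b)
  have e1 : ∏ a ∈ Finset.range i, ((f i : ℚ) - f a)
      = (-1)^i * ∏ a ∈ Finset.range i, ((f a : ℚ) - (f i : ℚ)) := prod_neg_form i _ _
  have e2 : ∏ a ∈ Finset.range i, ((c : ℚ) - f a)
      = (-1)^i * ∏ a ∈ Finset.range i, ((f a : ℚ) - (c : ℚ)) := prod_neg_form i _ _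
  rw [PD, PD, e1, e2]
  linear_combination ((-1 : ℚ)^i) * h

lemma PS_update (him : i < m) (c : ℕ) :
    PS m (Function.update f i c) * ∏ j ∈ (Finset.range m).erase i, ((f i : ℚ) + f j)
      = PS m f * ∏ j ∈ (Finset.range m).erase i, ((c : ℚ) + f j) := by
  rw [prod_erase_range i m him, prod_erase_range i m him]
  have h := double_prod_update him f c (fun a b => a + b)
  have e1 : ∏ a ∈ Finset.range i, ((f i : ℚ) + f a)
      = ∏ a ∈ Finset.range i, ((f a : ℚ) + (f i : ℚ)) :=
    Finset.prod_congr rfl fun a _ => by ring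
  have e2 : ∏ a ∈ Finset.range i, ((c : ℚ) + f a)
      = ∏ a ∈ Finset.range i, ((f a : ℚ) + (c : ℚ)) :=
    Finset.prod_congr rfl fun a _ => by ring
  rw [PS, PS, e1, e2]
  linear_combination h

lemma Fct_update (him : i < m) (hfi : 0 < f i) :
    Fct m f = (f i : ℚ) * Fct m (Function.update f i (f i - 1)) := by
  have h1 : Fct m f = ((f i).factorial : ℚ) *
      ∏ j ∈ (Finset.range m).erase i, ((f j).factorial : ℚ) :=
    (Finset.mul_prod_erase (Finset.range m) _ (Finset.mem_range.mpr him)).symm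
  have h2 : Fct m (Function.update f i (f i - 1)) = (((f i - 1).factorial : ℕ) : ℚ) *
      ∏ j ∈ (Finset.range m).erase i, ((f j).factorial : ℚ) := by
    rw [Fct, ← Finset.mul_prod_erase (Finset.range m) _ (Finset.mem_range.mpr him),
      Function.update_self]
    congr 1
    exact Finset.prod_congr rfl fun j hj => by
      rw [Function.update_of_ne (Finset.mem_erase.mp hj).1]
  have h3 : ((f i).factorial : ℚ) = (f i : ℚ) * ((f i - 1).factorial : ℚ) := by
    obtain ⟨k, hk⟩ : ∃ k, f i = k + 1 := ⟨f i - 1, by omega⟩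
    rw [hk, Nat.factorial_succ]
    push_cast
    simp
  rw [h1, h2, h3]
  ring

lemma Fct_congr {g : ℕ → ℕ} (h : ∀ j, j < m → f j = g j) : Fct m f = Fct m g :=
  Finset.prod_congr rfl fun j hj => by rw [h j (Finset.mem_range.mp hj)]

lemma PD_congr {g : ℕ → ℕ} (h : ∀ j, j < m → f j = g j) : PD m f = PD m g :=
  Finset.prod_congr rfl fun a ha => Finset.prod_congr rfl fun b hb => by
    rw [h a (Finset.mem_range.mp ha), h b (Finset.mem_Ioo.mp hb).2]

lemma PS_congr {g : ℕ → ℕ} (h : ∀ j, j < m → f j = g j) : PS m f = PS m g :=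
  Finset.prod_congr rfl fun a ha => Finset.prod_congr rfl fun b hb => by
    rw [h a (Finset.mem_range.mp ha), h b (Finset.mem_Ioo.mp hb).2]

end updates

-- main induction
theorem schur_main : ∀ n m (f : ℕ → ℕ), (∀ i j, i < j → j < m → f j < f i) →
    (∀ i, i < m → 0 < f i) → (∑ i ∈ Finset.range m, f i) = n →
    (numSYT (cells m f) : ℚ) * Fct m f * PS m f = (n.factorial : ℚ) * PD m f := by
  intro n
  induction n using Nat.strong_induction_on with
  | _ n IH =>
  intro m f hstrict hpos hsum
  rcases Nat.eq_zero_or_pos n with hn | hn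
  · -- base case
    subst hn
    have hm : m = 0 := by
      by_contra hm0
      have h1 : 0 < f 0 := hpos 0 (by omega)
      have h2 : f 0 ≤ ∑ i ∈ Finset.range m, f i :=
        Finset.single_le_sum (fun i _ => Nat.zero_le _) (Finset.mem_range.mpr (by omega))
      omega
    subst hm
    have : cells 0 f = ∅ := by simp [cells]
    rw [this, numSYT_empty, Fct, PD, PS]
    simp
  · -- inductive step
    have hm : 0 < m := by
      by_contra hm0
      rw [show m = 0 by omega] at hsum
      simp at hsum
      omega
    -- the recurrence
    have hne : (cells m f).Nonempty := by
      rw [← Finset.card_pos, card_cells, hsum]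
      omega
    have hinj : Set.InjOn (fun i => (i, i + f i - 1)) (rows m f) := by
      intro a _ b _ hab
      exact congrArg Prod.fst hab
    have hrec : numSYT (cells m f)
        = ∑ i ∈ rows m f, numSYT (cells m (Function.update f i (f i - 1))) := by
      rw [numSYT_rec hne, corners_cells hstrict hpos, Finset.sum_image hinj]
      exact Finset.sum_congr rfl fun i hi => by rw [erase_cells hstrict hpos hi]
    -- basic facts about members of rows
    have hrows_mem : ∀ i ∈ rows m f, i < m := fun i hi =>
      Finset.mem_range.mp (Finset.mem_filter.mp hi).1
    -- child equation via IH
    have child_eq : ∀ i ∈ rows m f,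
        (numSYT (cells m (Function.update f i (f i - 1))) : ℚ) *
          Fct m (Function.update f i (f i - 1)) * PS m (Function.update f i (f i - 1))
        = ((n-1).factorial : ℚ) * PD m (Function.update f i (f i - 1)) := by
      intro i hi
      have him : i < m := hrows_mem i hi
      have hfi : 0 < f i := hpos i him
      have hcs := child_strict hstrict hi
      have hsum' : ∑ j ∈ Finset.range m, Function.update f i (f i - 1) j
          = n - 1 := by
        rw [Finset.sum_update_of_mem (Finset.mem_range.mpr him),
          Finset.sdiff_singleton_eq_erase]
        have := Finset.add_sum_erase (Finset.range m) f (Finset.mem_range.mpr him)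
        omega
      rcases Nat.lt_or_ge 1 (f i) with hfi2 | hfi1
      · -- f i ≥ 2 : same m
        have hcp : ∀ j, j < m → 0 < Function.update f i (f i - 1) j := by
          intro j hj
          rw [Function.update_apply]
          split
          · omega
          · exact hpos j hj
        exact IH (n-1) (by omega) m _ hcs hcp hsum'
      · -- f i = 1 : last row disappears
        have hfi1' : f i = 1 := by omega
        have hmi : m = i + 1 := by
          obtain ⟨-, hcond⟩ := Finset.mem_filter.mp hi
          by_contra hmm
          have h1 : i + 1 < m := by omega
          have h2 := hcond h1
          have h3 := hpos (i+1) h1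
          omega
        subst hmi
        have hzero : Function.update f i (f i - 1) i = 0 := by
          rw [Function.update_self]; omega
        have hagree : ∀ j, j < i → Function.update f i (f i - 1) j = f j := by
          intro j hj
          rw [Function.update_of_ne (by omega)]
        have hcells : cells (i+1) (Function.update f i (f i - 1)) = cells i f := by
          rw [cells_last_zero hzero]
          exact cells_congr hagree
        have hsum'' : ∑ j ∈ Finset.range i, f j = n - 1 := by
          rw [Finset.sum_range_succ] at hsum
          omega
        have hIH := IH (n-1) (by omega) i f
          (fun a b hab hbm => hstrict a b hab (by omega))
          (fun a ha => hpos a (by omega)) hsum''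
        rw [hcells]
        rw [Fct_last_zero hzero, PD_last_zero hzero, PS_last_zero hzero]
        have hprodx : ∏ a ∈ Finset.range i, ((Function.update f i (f i - 1) a : ℕ) : ℚ)
            = ∏ a ∈ Finset.range i, ((f a : ℕ) : ℚ) :=
          Finset.prod_congr rfl fun a ha => by rw [hagree a (Finset.mem_range.mp ha)]
        rw [Fct_congr hagree, PD_congr (m := i) hagree, PS_congr (m := i) hagree, hprodx]
        linear_combination (∏ a ∈ Finset.range i, ((f a : ℕ) : ℚ)) * hIH
    -- abbreviations
    set x : ℕ → ℚ := fun i => (f i : ℚ) with hx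
    have hxv : ∀ i, x i = (f i : ℚ) := fun i => rfl
    set t : ℕ → ℚ := fun i => ((n-1).factorial : ℚ) * PD m f * (x i *
      ∏ j ∈ (Finset.range m).erase i,
        ((x i * (x i - 1) - x j * (x j + 1)) * (x i * (x i - 1) - x j * (x j - 1))⁻¹)) with ht
    have htv : ∀ i, t i = ((n-1).factorial : ℚ) * PD m f * (x i *
      ∏ j ∈ (Finset.range m).erase i,
        ((x i * (x i - 1) - x j * (x j + 1)) * (x i * (x i - 1) - x j * (x j - 1))⁻¹)) :=
      fun i => rfl
    -- claim 1
    have claim1 : ∀ i ∈ rows m f,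
        (numSYT (cells m (Function.update f i (f i - 1))) : ℚ) * Fct m f * PS m f = t i := by
      intro i hi
      have him : i < m := hrows_mem i hi
      have hfi : 0 < f i := hpos i him
      have hce := child_eq i hi
      have hcast : ((f i - 1 : ℕ) : ℚ) = x i - 1 := by
        rw [hxv]; push_cast [Nat.cast_sub hfi]; ring
      set Ad := ∏ j ∈ (Finset.range m).erase i, (x i - x j) with hAd
      set Bd := ∏ j ∈ (Finset.range m).erase i, ((x i - 1) - x j) with hBd
      set As := ∏ j ∈ (Finset.range m).erase i, (x i + x j) with hAs
      set Bs := ∏ j ∈ (Finset.range m).erase i, ((x i - 1) + x j) with hBs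
      have hPDu : PD m (Function.update f i (f i - 1)) * Ad = PD m f * Bd := by
        have := PD_update (f := f) him (f i - 1)
        rw [hcast] at this
        exact this
      have hPSu : PS m (Function.update f i (f i - 1)) * As = PS m f * Bs := by
        have := PS_update (f := f) him (f i - 1)
        rw [hcast] at this
        exact this
      have hFct : Fct m f = x i * Fct m (Function.update f i (f i - 1)) := Fct_update him hfi
      -- nonzeroness
      have hAd0 : Ad ≠ 0 := by
        rw [hAd, Finset.prod_ne_zero_iff]
        intro j hj
        obtain ⟨hji, hjm⟩ := Finset.mem_erase.mp hj
        rw [Finset.mem_range] at hjm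
        have hne : f i ≠ f j := by
          rcases lt_trichotomy i j with h | h | h
          · have := hstrict i j h hjm; omega
          · omega
          · have := hstrict j i h him; omega
        intro hcon
        have hxx : (f i : ℚ) = (f j : ℚ) := by
          have := sub_eq_zero.mp hcon
          rwa [hxv, hxv] at this
        exact hne (by exact_mod_cast hxx)
      have hBs0 : Bs ≠ 0 := by
        rw [hBs, Finset.prod_ne_zero_iff]
        intro j hj
        obtain ⟨hji, hjm⟩ := Finset.mem_erase.mp hj
        rw [Finset.mem_range] at hjm
        have h1 : 0 < f j := hpos j hjm
        have h2 : (1 : ℚ) ≤ x i := by rw [hxv]; exact_mod_cast hfi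
        have h3 : (1 : ℚ) ≤ x j := by rw [hxv]; exact_mod_cast h1
        intro hcon
        nlinarith [hcon]
      have hFct0 : Fct m (Function.update f i (f i - 1)) ≠ 0 := Fct_ne_zero m _
      have hPS0 : PS m (Function.update f i (f i - 1)) ≠ 0 :=
        PS_ne_zero (child_strict hstrict hi)
      -- rewrite t i
      have htid : t i = ((n-1).factorial : ℚ) * PD m f * (x i * ((Bd * As) * (Ad * Bs)⁻¹)) := by
        rw [htv]
        congr 1
        congr 1
        have e1 : ∏ j ∈ (Finset.range m).erase i,
            ((x i * (x i - 1) - x j * (x j + 1)) * (x i * (x i - 1) - x j * (x j - 1))⁻¹)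
            = (∏ j ∈ (Finset.range m).erase i, (x i * (x i - 1) - x j * (x j + 1))) *
              (∏ j ∈ (Finset.range m).erase i, (x i * (x i - 1) - x j * (x j - 1)))⁻¹ := by
          rw [Finset.prod_mul_distrib, Finset.prod_inv_distrib]
        have e2 : ∏ j ∈ (Finset.range m).erase i, (x i * (x i - 1) - x j * (x j + 1))
            = Bd * As := by
          rw [hBd, hAs, ← Finset.prod_mul_distrib]
          exact Finset.prod_congr rfl fun j _ => by ring
        have e3 : ∏ j ∈ (Finset.range m).erase i, (x i * (x i - 1) - x j * (x j - 1))
            = Ad * Bs := by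
          rw [hAd, hBs, ← Finset.prod_mul_distrib]
          exact Finset.prod_congr rfl fun j _ => by ring
        rw [e1, e2, e3]
      rw [htid]
      -- now cancel
      have hM : Fct m (Function.update f i (f i - 1)) * PS m (Function.update f i (f i - 1)) *
          (Ad * Bs) ≠ 0 := by
        exact mul_ne_zero (mul_ne_zero hFct0 hPS0) (mul_ne_zero hAd0 hBs0)
      apply mul_right_cancel₀ hM
      have hinv : (Ad * Bs) * (Ad * Bs)⁻¹ = 1 := mul_inv_cancel₀ (mul_ne_zero hAd0 hBs0)
      set E := (numSYT (cells m (Function.update f i (f i - 1))) : ℚ) with hE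
      set F' := Fct m (Function.update f i (f i - 1)) with hF'
      set S' := PS m (Function.update f i (f i - 1)) with hS'
      set k := ((n-1).factorial : ℚ) with hk
      linear_combination (E * PS m f * F' * S' * Ad * Bs) * hFct +
        (x i * PS m f * F' * Ad * Bs) * hce + (k * x i * PS m f * F' * Bs) * hPDu -
        (k * x i * F' * Bd * PD m f) * hPSu -
        (k * PD m f * x i * Bd * As * F' * S') * hinv
    -- claim 2
    have claim2 : ∀ i ∈ Finset.range m, i ∉ rows m f → t i = 0 := by
      intro i hi hni
      rw [Finset.mem_range] at hi
      have h1 : i + 1 < m ∧ ¬ (f (i+1) + 1 < f i) := by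
        by_contra hcon
        apply hni
        rw [rows, Finset.mem_filter]
        refine ⟨Finset.mem_range.mpr hi, ?_⟩
        intro h
        by_contra h2
        exact hcon ⟨h, h2⟩
      have h2 := hstrict i (i+1) (by omega) h1.1
      have h3 : f i = f (i+1) + 1 := by omega
      rw [htv]
      have hzero : (x i * (x i - 1) - x (i+1) * (x (i+1) + 1)) *
          (x i * (x i - 1) - x (i+1) * (x (i+1) - 1))⁻¹ = 0 := by
        have hthis : x i = x (i+1) + 1 := by rw [hxv, hxv]; exact_mod_cast h3
        have hz1 : x i * (x i - 1) - x (i+1) * (x (i+1) + 1) = 0 := by rw [hthis]; ring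
        rw [hz1, zero_mul]
      rw [Finset.prod_eq_zero
        (Finset.mem_erase.mpr ⟨(by omega : i + 1 ≠ i), Finset.mem_range.mpr h1.1⟩) hzero]
      ring
    -- claim 3
    have claim3 : ∑ i ∈ Finset.range m, t i = (n.factorial : ℚ) * PD m f := by
      have hs : (Finset.range m).Nonempty := by
        rw [Finset.nonempty_range_iff]; omega
      have hxne : ∀ i ∈ Finset.range m, x i ≠ 0 := by
        intro i hi
        rw [Finset.mem_range] at hi
        have h1 := hpos i hi
        rw [hxv]
        exact_mod_cast (by omega : f i ≠ 0)
      have hu : Set.InjOn (fun i => x i * (x i - 1)) (Finset.range m) := by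
        intro i hi j hj hij
        rw [Finset.coe_range, Set.mem_Iio] at hi hj
        have hfac : (x i - x j) * (x i + x j - 1) = 0 := by linear_combination hij
        rcases mul_eq_zero.mp hfac with h | h
        · have : f i = f j := by
            have h5 := sub_eq_zero.mp h
            rw [hxv, hxv] at h5
            exact_mod_cast h5
          rcases lt_trichotomy i j with hc | hc | hc
          · have := hstrict i j hc hj; omega
          · exact hc
          · have := hstrict j i hc hi; omega
        · exfalso
          have h2 : (1 : ℚ) ≤ x i := by rw [hxv]; exact_mod_cast hpos i hi
          have h3 : (1 : ℚ) ≤ x j := by rw [hxv]; exact_mod_cast hpos j hj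
          linarith
      have hid := schur_identity hs x hxne hu
      have hsx : ∑ i ∈ Finset.range m, x i = (n : ℚ) := by
        rw [← hsum]
        push_cast
        exact Finset.sum_congr rfl fun i _ => hxv i
      have hfact : (n.factorial : ℚ) = (n : ℚ) * ((n-1).factorial : ℚ) := by
        obtain ⟨k, hk⟩ : ∃ k, n = k + 1 := ⟨n - 1, by omega⟩
        rw [hk, Nat.factorial_succ]
        push_cast
        simp
      calc ∑ i ∈ Finset.range m, t i
          = ((n-1).factorial : ℚ) * PD m f * ∑ i ∈ Finset.range m, (x i *
            ∏ j ∈ (Finset.range m).erase i,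
              ((x i * (x i - 1) - x j * (x j + 1)) * (x i * (x i - 1) - x j * (x j - 1))⁻¹)) := by
            rw [Finset.mul_sum]
        _ = ((n-1).factorial : ℚ) * PD m f * (n : ℚ) := by rw [hid, hsx]
        _ = (n.factorial : ℚ) * PD m f := by rw [hfact]; ring
    -- assemble
    rw [hrec]
    push_cast
    rw [Finset.sum_mul, Finset.sum_mul]
    rw [Finset.sum_congr rfl claim1]
    have hsub : rows m f ⊆ Finset.range m := fun i hi => (Finset.mem_filter.mp hi).1
    rw [Finset.sum_subset hsub claim2]
    exact claim3

lemma list_sum_getD (L : List ℕ) : L.sum = ∑ i ∈ Finset.range L.length, L.getD i 0 := by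
  induction L with
  | nil => simp
  | cons a t ih =>
    rw [List.sum_cons, List.length_cons, Finset.sum_range_succ', ih]
    simp [List.getD_cons_succ, List.getD_cons_zero]
    ring


/-- Schur's formula for shifted shapes (stated multiplicatively). -/
theorem schur_formula (m : ℕ) (L : List ℕ) (hlen : L.length = m)
    (hstrict : ∀ i j, i < j → j < m → L.getD j 0 < L.getD i 0)
    (hpos : ∀ i, i < m → 0 < L.getD i 0) :
    (numSYT (shiftedCells L) * ∏ i ∈ Finset.range m, (L.getD i 0).factorial) *
        ∏ i ∈ Finset.range m, ∏ j ∈ Finset.Ioo i m, (L.getD i 0 + L.getD j 0)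
      = L.sum.factorial *
          ∏ i ∈ Finset.range m, ∏ j ∈ Finset.Ioo i m,
            (L.getD i 0 - L.getD j 0) := by
  set f : ℕ → ℕ := fun i => L.getD i 0 with hf
  have hcells : shiftedCells L = cells m f := by
    rw [shiftedCells, cells, hlen]
  have hsum : L.sum = ∑ i ∈ Finset.range m, f i := by
    rw [list_sum_getD, hlen]
  have key := schur_main (∑ i ∈ Finset.range m, f i) m f hstrict hpos rfl
  have hcast : (((numSYT (shiftedCells L) * ∏ i ∈ Finset.range m, (f i).factorial) *
      ∏ i ∈ Finset.range m, ∏ j ∈ Finset.Ioo i m, (f i + f j) : ℕ) : ℚ)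
      = ((L.sum.factorial *
          ∏ i ∈ Finset.range m, ∏ j ∈ Finset.Ioo i m, (f i - f j) : ℕ) : ℚ) := by
    push_cast
    have hsub : ((∏ i ∈ Finset.range m, ∏ j ∈ Finset.Ioo i m, (f i - f j) : ℕ) : ℚ)
        = ∏ i ∈ Finset.range m, ∏ j ∈ Finset.Ioo i m, ((f i : ℚ) - (f j : ℚ)) := by
      push_cast
      refine Finset.prod_congr rfl fun i hi => Finset.prod_congr rfl fun j hj => ?_
      rw [Finset.mem_Ioo] at hj
      have := hstrict i j hj.1 hj.2
      rw [Nat.cast_sub (le_of_lt this)]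
    rw [hcells, hsum]
    push_cast at hsub
    rw [hsub]
    unfold Fct PS PD at key
    push_cast at key
    linear_combination key
  exact_mod_cast hcast
end

section
/- Let m and t be nonnegative integers with t ≤ binomial(m+1,2), let T be a standard Young tableau of shifted staircase shape [m], let T1 be the subtableau of cells with entries at most t, and let T2 be obtained from the remaining cells by transposing the shape and replacing each entry i by M - i + 1 where M = binomial(m+1,2). Then T1 and T2 are standard Young tableaux of shifted shapes λ¹ and λ², respectively, and the set of parts {m, m-1, ..., 1} is the disjoint union of the sets of parts of λ¹ and of λ². -/
open Finset

namespace SSplit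

/-- `S` is a "lower" subset of the shifted staircase of order `m`. -/
def IsLower (m : ℕ) (S : Finset (ℕ × ℕ)) : Prop :=
  (∀ c ∈ S, c.1 ≤ c.2 ∧ c.2 < m) ∧
  (∀ i j, i ≤ j → (i, j + 1) ∈ S → (i, j) ∈ S) ∧
  (∀ i j, (i + 1, j) ∈ S → (i, j) ∈ S)

variable {m : ℕ} {S : Finset (ℕ × ℕ)}

lemma row_closed (h : IsLower m S) {i j j' : ℕ} (hj : (i, j) ∈ S) (h1 : i ≤ j')
    (h2 : j' ≤ j) : (i, j') ∈ S := by
  obtain ⟨d, rfl⟩ := Nat.exists_eq_add_of_le h2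
  clear h2
  induction d with
  | zero => simpa using hj
  | succ n ih => exact ih (h.2.1 i (j' + n) (le_add_right h1) hj)

/-- Row length of `S` in row `i`. -/
def rowLen (m : ℕ) (S : Finset (ℕ × ℕ)) (i : ℕ) : ℕ :=
  ((Finset.range m).filter fun j => (i, j) ∈ S).card

lemma mem_iff_rowLen (h : IsLower m S) (i j : ℕ) :
    (i, j) ∈ S ↔ i ≤ j ∧ j < i + rowLen m S i := by
  set R := (Finset.range m).filter fun j => (i, j) ∈ S with hR
  have hmemR : ∀ j, j ∈ R ↔ (i, j) ∈ S := by
    intro j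
    simp only [hR, mem_filter, mem_range, and_iff_right_iff_imp]
    exact fun hj => ((h.1 _ hj).2)
  rcases R.eq_empty_or_nonempty with he | hne
  · constructor
    · intro hj; exact absurd ((hmemR j).2 hj) (by simp [he])
    · rintro ⟨h1, h2⟩
      exfalso
      have : rowLen m S i = 0 := by simp [rowLen, ← hR, he]
      omega
  · set b := R.max' hne with hb
    have hbS : (i, b) ∈ S := (hmemR b).1 (R.max'_mem hne)
    have hRIcc : R = Finset.Icc i b := by
      ext j
      rw [hmemR, Finset.mem_Icc]
      constructor
      · intro hj
        exact ⟨(h.1 _ hj).1, R.le_max' j ((hmemR j).2 hj)⟩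
      · rintro ⟨h1, h2⟩; exact row_closed h hbS h1 h2
    have hib : i ≤ b := (h.1 _ hbS).1
    have hcard : rowLen m S i = b + 1 - i := by
      rw [rowLen, ← hR, hRIcc, Nat.card_Icc]
    rw [← hmemR, hRIcc, Finset.mem_Icc, hcard]
    omega

lemma rowLen_succ_lt (h : IsLower m S) {i : ℕ} (hne : rowLen m S (i + 1) ≠ 0) :
    rowLen m S (i + 1) < rowLen m S i := by
  have h1 : (i + 1, i + rowLen m S (i + 1)) ∈ S := by
    rw [mem_iff_rowLen h]; omega
  have h2 : (i, i + rowLen m S (i + 1)) ∈ S := h.2.2 _ _ h1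
  rw [mem_iff_rowLen h] at h2
  omega

lemma rowLen_lt (h : IsLower m S) {i j : ℕ} (hij : i < j) (hne : rowLen m S j ≠ 0) :
    rowLen m S j < rowLen m S i := by
  obtain ⟨d, rfl⟩ : ∃ d, j = i + 1 + d := ⟨j - i - 1, by omega⟩
  clear hij
  induction d generalizing i with
  | zero => exact rowLen_succ_lt h hne
  | succ n ih =>
      rw [show i + 1 + (n + 1) = (i + 1) + 1 + n from by omega] at hne ⊢
      have h1 : rowLen m S (i + 1 + 1 + n) < rowLen m S (i + 1) := ih (i := i + 1) hne
      have h2 : rowLen m S (i + 1) < rowLen m S i := rowLen_succ_lt h (by omega)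
      omega

lemma rowLen_pos_lt_m (h : IsLower m S) {i : ℕ} (hne : rowLen m S i ≠ 0) : i < m := by
  have : (i, i) ∈ S := by rw [mem_iff_rowLen h]; omega
  exact (h.1 _ this).2

/-- number of nonempty rows -/
def nrows (m : ℕ) (S : Finset (ℕ × ℕ)) : ℕ :=
  ((Finset.range m).filter fun i => rowLen m S i ≠ 0).card

lemma downclosed_eq_range {s : Finset ℕ} (h : ∀ n, n + 1 ∈ s → n ∈ s) :
    ∀ i, i ∈ s ↔ i < s.card := by
  have hmono0 : ∀ d i, i + d ∈ s → i ∈ s := by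
    intro d
    induction d with
    | zero => intro i hi; simpa using hi
    | succ n ih => intro i hi; exact ih i (h (i + n) hi)
  have hmono : ∀ j ∈ s, ∀ i, i ≤ j → i ∈ s := by
    intro j hj i hij
    exact hmono0 (j - i) i (by rwa [Nat.add_sub_cancel' hij])
  intro i
  constructor
  · intro hi
    have : Finset.range (i + 1) ⊆ s := by
      intro x hx
      exact hmono i hi x (by simpa using Nat.lt_succ_iff.mp (Finset.mem_range.mp hx))
    have := Finset.card_le_card this
    simpa using this
  · intro hi
    by_contra hns
    have : s ⊆ Finset.range i := by
      intro x hx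
      rw [Finset.mem_range]
      by_contra hxi
      exact hns (hmono x hx i (by omega))
    have := Finset.card_le_card this
    simp at this; omega

lemma lt_nrows_iff (h : IsLower m S) (i : ℕ) :
    i < nrows m S ↔ rowLen m S i ≠ 0 := by
  have := downclosed_eq_range (s := (Finset.range m).filter fun i => rowLen m S i ≠ 0)
    (fun n hn => by
      simp only [mem_filter, mem_range] at hn ⊢
      have h2 := rowLen_succ_lt h hn.2
      exact ⟨by omega, by omega⟩) i
  rw [nrows, ← this, mem_filter, mem_range]
  constructor
  · exact fun h' => h'.2
  · exact fun h' => ⟨rowLen_pos_lt_m h h', h'⟩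

/-- the list of parts -/
def partsList (m : ℕ) (S : Finset (ℕ × ℕ)) : List ℕ :=
  (List.range (nrows m S)).map (rowLen m S)

lemma partsList_length : (partsList m S).length = nrows m S := by
  simp [partsList]

lemma partsList_getD {i : ℕ} (hi : i < nrows m S) :
    (partsList m S).getD i 0 = rowLen m S i := by
  rw [partsList, List.getD_eq_getElem?_getD]
  simp [hi]

lemma eq_shiftedCells (h : IsLower m S) : S = shiftedCells (partsList m S) := by
  ext c
  obtain ⟨i, j⟩ := c
  simp only [shiftedCells, Finset.mem_biUnion, Finset.mem_range, Finset.mem_image,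
    partsList_length]
  rw [mem_iff_rowLen h]
  constructor
  · rintro ⟨h1, h2⟩
    have hne : rowLen m S i ≠ 0 := by omega
    refine ⟨i, (lt_nrows_iff h i).2 hne, j - i, ?_, by simp; omega⟩
    rw [partsList_getD ((lt_nrows_iff h i).2 hne)]; omega
  · rintro ⟨a, ha, b, hb, hab⟩
    rw [partsList_getD ha] at hb
    obtain ⟨rfl, rfl⟩ : a = i ∧ a + b = j := by
      simpa using hab
    constructor
    · omega
    · have : rowLen m S a ≠ 0 := (lt_nrows_iff h a).1 ha
      omega


/-- number of cells of `S` on the antidiagonal `j - i = v - 1`. -/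
def phi (m : ℕ) (S : Finset (ℕ × ℕ)) (v : ℕ) : ℕ :=
  ((Finset.range m).filter fun i => (i, i + v - 1) ∈ S).card

lemma phi_eq_rowLen_count (h : IsLower m S) {v : ℕ} (hv : 1 ≤ v) :
    phi m S v = ((Finset.range m).filter fun i => v ≤ rowLen m S i).card := by
  unfold phi
  congr 1
  apply Finset.filter_congr
  intro i _
  rw [mem_iff_rowLen h]
  omega

lemma phi_restrict (h : IsLower m S) {v : ℕ} (hv : 1 ≤ v) :
    phi m S v = ((Finset.range (m + 1 - v)).filter fun i => (i, i + v - 1) ∈ S).card := by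
  unfold phi
  congr 1
  ext i
  simp only [mem_filter, mem_range]
  constructor
  · rintro ⟨_, hi⟩
    have := (h.1 _ hi).2
    exact ⟨by omega, hi⟩
  · rintro ⟨hi, hi2⟩
    exact ⟨by omega, hi2⟩

lemma phi_le (h : IsLower m S) {v : ℕ} (hv : 1 ≤ v) : phi m S v ≤ m + 1 - v := by
  rw [phi_restrict h hv]
  exact le_trans (Finset.card_filter_le _ _) (by simp)

lemma phi_mono (h : IsLower m S) {v : ℕ} (hv : 1 ≤ v) : phi m S (v + 1) ≤ phi m S v := by
  rw [phi_eq_rowLen_count h hv, phi_eq_rowLen_count h (by omega)]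
  apply Finset.card_le_card
  apply Finset.monotone_filter_right
  intro i hi
  omega

lemma mem_parts_iff (h : IsLower m S) (v : ℕ) :
    v ∈ (partsList m S).toFinset ↔ 1 ≤ v ∧ phi m S (v + 1) < phi m S v := by
  have hmem : v ∈ (partsList m S).toFinset ↔ ∃ i < nrows m S, rowLen m S i = v := by
    simp [partsList, List.mem_map, List.mem_range]
  constructor
  · intro hv
    obtain ⟨i, hik, hiv⟩ := hmem.1 hv
    have hv1 : 1 ≤ v := by
      have := (lt_nrows_iff h i).1 hik; omega
    refine ⟨hv1, ?_⟩
    rw [phi_eq_rowLen_count h hv1, phi_eq_rowLen_count h (by omega)]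
    apply Finset.card_lt_card
    constructor
    · apply Finset.monotone_filter_right; intro i hi; omega
    · intro hsub
      have hi1 : i ∈ (Finset.range m).filter fun i => v ≤ rowLen m S i := by
        simp only [mem_filter, mem_range]
        exact ⟨rowLen_pos_lt_m h (by omega), by omega⟩
      have := hsub hi1
      simp only [mem_filter] at this
      omega
  · rintro ⟨hv1, hlt⟩
    rw [phi_eq_rowLen_count h hv1, phi_eq_rowLen_count h (by omega)] at hlt
    have hss : ((Finset.range m).filter fun i => v + 1 ≤ rowLen m S i) ⊂
        ((Finset.range m).filter fun i => v ≤ rowLen m S i) := by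
      refine ⟨?_, fun hcon => absurd (Finset.card_le_card hcon) (by omega)⟩
      apply Finset.monotone_filter_right; intro i hi; omega
    obtain ⟨i, hi1, hi2⟩ := Finset.exists_of_ssubset hss
    simp only [mem_filter, mem_range] at hi1 hi2
    have hiv : rowLen m S i = v := by
      rcases hi1 with ⟨him, hge⟩
      by_contra hne
      exact hi2 ⟨him, by omega⟩
    exact hmem.2 ⟨i, (lt_nrows_iff h i).2 (by omega), hiv⟩

lemma mem_parts_le (h : IsLower m S) {v : ℕ} (hv : v ∈ (partsList m S).toFinset) :
    1 ≤ v ∧ v ≤ m := by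
  rw [mem_parts_iff h] at hv
  obtain ⟨hv1, hlt⟩ := hv
  have hle := phi_le h hv1
  refine ⟨hv1, ?_⟩
  omega


lemma mem_staircase {m i j : ℕ} :
    (i, j) ∈ shiftedCells (stair m) ↔ i ≤ j ∧ j < m := by
  simp only [shiftedCells, stair, Finset.mem_biUnion, Finset.mem_range, Finset.mem_image,
    List.length_map, List.length_range]
  constructor
  · rintro ⟨a, ha, b, hb, hab⟩
    obtain ⟨rfl, rfl⟩ : a = i ∧ a + b = j := by simpa using hab
    have : ((List.range m).map fun i => m - i).getD a 0 = m - a := by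
      rw [List.getD_eq_getElem?_getD]; simp [ha]
    rw [this] at hb
    omega
  · rintro ⟨h1, h2⟩
    refine ⟨i, by omega, j - i, ?_, by simp; omega⟩
    have : ((List.range m).map fun i => m - i).getD i 0 = m - i := by
      rw [List.getD_eq_getElem?_getD]; simp [show i < m by omega]
    rw [this]; omega

lemma sum_range_sub (m : ℕ) : ∑ i ∈ Finset.range m, (m - i) = (m + 1).choose 2 := by
  induction m with
  | zero => simp
  | succ n ih =>
      rw [Finset.sum_range_succ]
      have h1 : ∑ i ∈ Finset.range n, (n + 1 - i) = (∑ i ∈ Finset.range n, (n - i)) + n :=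
        calc ∑ i ∈ Finset.range n, (n + 1 - i)
            = ∑ i ∈ Finset.range n, ((n - i) + 1) := Finset.sum_congr rfl
              (fun i hi => by rw [Finset.mem_range] at hi; omega)
          _ = (∑ i ∈ Finset.range n, (n - i)) + n := by
              rw [Finset.sum_add_distrib]; simp
      rw [h1, ih, Nat.choose_succ_succ (n + 1) 1]
      simp [Nat.choose_one_right]
      omega

lemma card_staircase (m : ℕ) : (shiftedCells (stair m)).card = (m + 1).choose 2 := by
  rw [shiftedCells, Finset.card_biUnion]
  · rw [← sum_range_sub m]
    apply Finset.sum_congr (by simp [stair]) 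
    intro i hi
    simp only [stair, List.length_map, List.length_range] at hi ⊢
    rw [Finset.mem_range] at hi
    have hgd : ((List.range m).map fun i => m - i).getD i 0 = m - i := by
      rw [List.getD_eq_getElem?_getD]; simp [hi]
    rw [hgd, Finset.card_image_of_injective _ (fun a b hab => by simpa using hab),
      Finset.card_range]
  · intro a _ b _ hab
    simp only [Finset.disjoint_left, Finset.mem_image]
    rintro c ⟨x, _, rfl⟩ ⟨y, _, hy⟩
    exact hab ((congrArg Prod.fst hy).symm)

end SSplit


/-- splitting a staircase SYT at value `t` produces two shifted SYT
whose shapes have complementary sets of parts in `{1,…,m}`. -/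
theorem staircase_split (m t : ℕ) (ht : t ≤ (m + 1).choose 2)
    (T : ℕ × ℕ → ℕ) (hT : IsSYT (shiftedCells (stair m)) T)
    (S1 S2 : Finset (ℕ × ℕ)) (T1 T2 : ℕ × ℕ → ℕ)
    (hS1 : S1 = (shiftedCells (stair m)).filter fun c => T c ≤ t)
    (hS2 : S2 = ((shiftedCells (stair m)).filter fun c => t < T c).image
        fun c => (m - 1 - c.2, m - 1 - c.1))
    (hT1 : T1 = fun c => if c ∈ S1 then T c else 0)
    (hT2 : T2 = fun c =>
        if c ∈ S2 then (m + 1).choose 2 + 1 - T (m - 1 - c.2, m - 1 - c.1) else 0) :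
    ∃ L1 L2 : List ℕ,
      (∀ i j, i < j → j < L1.length → L1.getD j 0 < L1.getD i 0) ∧
      (∀ i, i < L1.length → 0 < L1.getD i 0) ∧
      (∀ i j, i < j → j < L2.length → L2.getD j 0 < L2.getD i 0) ∧
      (∀ i, i < L2.length → 0 < L2.getD i 0) ∧
      S1 = shiftedCells L1 ∧ S2 = shiftedCells L2 ∧
      IsSYT S1 T1 ∧ IsSYT S2 T2 ∧
      Disjoint L1.toFinset L2.toFinset ∧
      L1.toFinset ∪ L2.toFinset = Finset.Icc 1 m := by
  set M := (m + 1).choose 2 with hM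
  have hcards : (shiftedCells (stair m)).card = M := SSplit.card_staircase m
  obtain ⟨hbij0, hzero, hrow, hcol⟩ := hT
  rw [hcards] at hbij0
  -- membership characterizations
  have mem_S1 : ∀ i j : ℕ, ((i, j) ∈ S1 ↔ (i ≤ j ∧ j < m) ∧ T (i, j) ≤ t) := by
    intro i j
    rw [hS1, Finset.mem_filter, SSplit.mem_staircase]
  have mem_S2 : ∀ r s : ℕ, ((r, s) ∈ S2 ↔ r ≤ s ∧ s < m ∧ t < T (m - 1 - s, m - 1 - r)) := by
    intro r s
    rw [hS2]
    simp only [Finset.mem_image, Finset.mem_filter]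
    constructor
    · rintro ⟨⟨p, q⟩, ⟨hpq, ht'⟩, heq⟩
      rw [SSplit.mem_staircase] at hpq
      obtain ⟨h1, h2⟩ := hpq
      have hr : m - 1 - q = r := congrArg Prod.fst heq
      have hs : m - 1 - p = s := congrArg Prod.snd heq
      have hp : p = m - 1 - s := by omega
      have hq : q = m - 1 - r := by omega
      exact ⟨by omega, by omega, by rw [← hp, ← hq]; exact ht'⟩
    · rintro ⟨h1, h2, h3⟩
      refine ⟨(m - 1 - s, m - 1 - r), ⟨?_, h3⟩, ?_⟩
      · rw [SSplit.mem_staircase]; omega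
      · simp only [Prod.mk.injEq]; constructor <;> omega
  -- lower-set structure
  have hlow1 : SSplit.IsLower m S1 := by
    refine ⟨?_, ?_, ?_⟩
    · rintro ⟨i, j⟩ hc
      exact ((mem_S1 i j).1 hc).1
    · intro i j hij hc
      rw [mem_S1] at hc ⊢
      obtain ⟨⟨h1, h2⟩, h3⟩ := hc
      have hst1 : (i, j) ∈ shiftedCells (stair m) := SSplit.mem_staircase.2 ⟨hij, by omega⟩
      have hst2 : ((i, j).1, (i, j).2 + 1) ∈ shiftedCells (stair m) :=
        SSplit.mem_staircase.2 ⟨by omega, by omega⟩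
      have := hrow (i, j) hst1 hst2
      simp only at this
      exact ⟨⟨hij, by omega⟩, by omega⟩
    · intro i j hc
      rw [mem_S1] at hc ⊢
      obtain ⟨⟨h1, h2⟩, h3⟩ := hc
      have hst1 : (i, j) ∈ shiftedCells (stair m) := SSplit.mem_staircase.2 ⟨by omega, h2⟩
      have hst2 : ((i, j).1 + 1, (i, j).2) ∈ shiftedCells (stair m) :=
        SSplit.mem_staircase.2 ⟨h1, h2⟩
      have := hcol (i, j) hst1 hst2
      simp only at this
      exact ⟨⟨by omega, h2⟩, by omega⟩
  have hlow2 : SSplit.IsLower m S2 := by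
    refine ⟨?_, ?_, ?_⟩
    · rintro ⟨r, s⟩ hc
      have := (mem_S2 r s).1 hc
      exact ⟨this.1, this.2.1⟩
    · intro r s hrs hc
      rw [mem_S2] at hc ⊢
      obtain ⟨h1, h2, h3⟩ := hc
      refine ⟨hrs, by omega, ?_⟩
      have hst1 : (m - 1 - (s + 1), m - 1 - r) ∈ shiftedCells (stair m) :=
        SSplit.mem_staircase.2 ⟨by omega, by omega⟩
      have hst2 : ((m - 1 - (s + 1), m - 1 - r).1 + 1, (m - 1 - (s + 1), m - 1 - r).2) ∈
          shiftedCells (stair m) := SSplit.mem_staircase.2 ⟨by simp; omega, by simp; omega⟩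
      have hkey := hcol _ hst1 hst2
      simp only at hkey
      rw [show m - 1 - (s + 1) + 1 = m - 1 - s from by omega] at hkey
      omega
    · intro r s hc
      rw [mem_S2] at hc ⊢
      obtain ⟨h1, h2, h3⟩ := hc
      refine ⟨by omega, h2, ?_⟩
      have hst1 : (m - 1 - s, m - 1 - (r + 1)) ∈ shiftedCells (stair m) :=
        SSplit.mem_staircase.2 ⟨by omega, by omega⟩
      have hst2 : ((m - 1 - s, m - 1 - (r + 1)).1, (m - 1 - s, m - 1 - (r + 1)).2 + 1) ∈
          shiftedCells (stair m) := SSplit.mem_staircase.2 ⟨by simp; omega, by simp; omega⟩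
      have hkey := hrow _ hst1 hst2
      simp only at hkey
      rw [show m - 1 - (r + 1) + 1 = m - 1 - r from by omega] at hkey
      omega
  have hsub1 : (S1 : Set (ℕ × ℕ)) ⊆ ↑(shiftedCells (stair m)) := by
    rw [hS1]; exact Finset.coe_subset.mpr (Finset.filter_subset _ _)
  -- cardinality of S1
  have hbijS1 : Set.BijOn T ↑S1 (Set.Icc 1 t) := by
    refine ⟨?_, hbij0.injOn.mono hsub1, ?_⟩
    · intro c hc
      have hc' : c ∈ S1 := hc
      rw [hS1, Finset.mem_filter] at hc'
      have := hbij0.mapsTo (Finset.mem_coe.mpr hc'.1)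
      exact ⟨this.1, hc'.2⟩
    · intro v hv
      obtain ⟨c, hc, rfl⟩ := hbij0.surjOn (⟨hv.1, le_trans hv.2 ht⟩ : v ∈ Set.Icc 1 M)
      refine ⟨c, ?_, rfl⟩
      show c ∈ S1
      rw [hS1, Finset.mem_filter]
      exact ⟨hc, hv.2⟩
  have hS1card : S1.card = t := by
    rw [← Finset.card_image_of_injOn hbijS1.injOn]
    have himg : S1.image T = Finset.Icc 1 t := by
      ext v
      simp only [Finset.mem_image, Finset.mem_Icc]
      constructor
      · rintro ⟨c, hc, rfl⟩
        exact hbijS1.mapsTo (Finset.mem_coe.mpr hc)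
      · intro hv
        obtain ⟨c, hc, rfl⟩ := hbijS1.surjOn (⟨hv.1, hv.2⟩ : v ∈ Set.Icc 1 t)
        exact ⟨c, hc, rfl⟩
    rw [himg, Nat.card_Icc]
    omega
  -- the SYT structure on S1
  have hSYT1 : IsSYT S1 T1 := by
    refine ⟨?_, ?_, ?_, ?_⟩
    · rw [hS1card]
      refine hbijS1.congr ?_
      intro c hc
      rw [hT1]
      simp only
      rw [if_pos (Finset.mem_coe.mp hc)]
    · intro c hc
      rw [hT1]
      simp only
      rw [if_neg hc]
    · intro c hc hc'
      rw [hT1]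
      simp only
      rw [if_pos hc, if_pos hc']
      exact hrow c (hsub1 hc) (hsub1 hc')
    · intro c hc hc'
      rw [hT1]
      simp only
      rw [if_pos hc, if_pos hc']
      exact hcol c (hsub1 hc) (hsub1 hc')
  -- cardinality of S2
  have hbijS2 : Set.BijOn (fun c : ℕ × ℕ => M + 1 - T (m - 1 - c.2, m - 1 - c.1)) ↑S2
      (Set.Icc 1 (M - t)) := by
    refine ⟨?_, ?_, ?_⟩
    · rintro ⟨r, s⟩ hc
      have h2 := (mem_S2 r s).1 hc
      have hst : (m - 1 - s, m - 1 - r) ∈ shiftedCells (stair m) :=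
        SSplit.mem_staircase.2 ⟨by omega, by omega⟩
      have := hbij0.mapsTo (Finset.mem_coe.mpr hst)
      simp only [Set.mem_Icc] at this ⊢
      omega
    · rintro ⟨r, s⟩ hc ⟨r', s'⟩ hc' heq
      have h2 := (mem_S2 r s).1 hc
      have h2' := (mem_S2 r' s').1 hc'
      have hst : (m - 1 - s, m - 1 - r) ∈ shiftedCells (stair m) :=
        SSplit.mem_staircase.2 ⟨by omega, by omega⟩
      have hst' : (m - 1 - s', m - 1 - r') ∈ shiftedCells (stair m) :=
        SSplit.mem_staircase.2 ⟨by omega, by omega⟩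
      have hb := hbij0.mapsTo (Finset.mem_coe.mpr hst)
      have hb' := hbij0.mapsTo (Finset.mem_coe.mpr hst')
      simp only [Set.mem_Icc] at hb hb'
      simp only at heq
      have hTeq : T (m - 1 - s, m - 1 - r) = T (m - 1 - s', m - 1 - r') := by omega
      have := hbij0.injOn (Finset.mem_coe.mpr hst) (Finset.mem_coe.mpr hst') hTeq
      have e1 : m - 1 - s = m - 1 - s' := congrArg Prod.fst this
      have e2 : m - 1 - r = m - 1 - r' := congrArg Prod.snd this
      have : r = r' ∧ s = s' := by omega
      simp [Prod.ext_iff, this.1, this.2]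
    · intro v hv
      simp only [Set.mem_Icc] at hv
      have hw : M + 1 - v ∈ Set.Icc 1 M := by simp only [Set.mem_Icc]; omega
      obtain ⟨⟨p, q⟩, hc, hTc⟩ := hbij0.surjOn hw
      have hpq : p ≤ q ∧ q < m := SSplit.mem_staircase.1 hc
      have hmem : (m - 1 - q, m - 1 - p) ∈ S2 := by
        rw [mem_S2]
        refine ⟨by omega, by omega, ?_⟩
        rw [show m - 1 - (m - 1 - p) = p from by omega,
          show m - 1 - (m - 1 - q) = q from by omega, hTc]
        omega
      refine ⟨(m - 1 - q, m - 1 - p), Finset.mem_coe.mpr hmem, ?_⟩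
      simp only
      rw [show m - 1 - (m - 1 - p) = p from by omega,
        show m - 1 - (m - 1 - q) = q from by omega, hTc]
      omega
  have hS2card : S2.card = M - t := by
    rw [← Finset.card_image_of_injOn hbijS2.injOn]
    have himg : S2.image (fun c : ℕ × ℕ => M + 1 - T (m - 1 - c.2, m - 1 - c.1)) =
        Finset.Icc 1 (M - t) := by
      ext v
      simp only [Finset.mem_image, Finset.mem_Icc]
      constructor
      · rintro ⟨c, hc, rfl⟩
        exact hbijS2.mapsTo (Finset.mem_coe.mpr hc)
      · intro hv
        obtain ⟨c, hc, rfl⟩ := hbijS2.surjOn (⟨hv.1, hv.2⟩ : v ∈ Set.Icc 1 (M - t))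
        exact ⟨c, hc, rfl⟩
    rw [himg, Nat.card_Icc]
    omega
  have hSYT2 : IsSYT S2 T2 := by
    refine ⟨?_, ?_, ?_, ?_⟩
    · rw [hS2card]
      refine hbijS2.congr ?_
      intro c hc
      rw [hT2]
      simp only
      rw [if_pos (Finset.mem_coe.mp hc)]
    · intro c hc
      rw [hT2]
      simp only
      rw [if_neg hc]
    · rintro ⟨r, s⟩ hc hc'
      rw [hT2]
      simp only
      rw [if_pos hc, if_pos hc']
      have h2 := (mem_S2 r s).1 hc
      have h2' := (mem_S2 r (s + 1)).1 hc'
      have hst1 : (m - 1 - (s + 1), m - 1 - r) ∈ shiftedCells (stair m) :=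
        SSplit.mem_staircase.2 ⟨by omega, by omega⟩
      have hst2 : ((m - 1 - (s + 1), m - 1 - r).1 + 1, (m - 1 - (s + 1), m - 1 - r).2) ∈
          shiftedCells (stair m) := SSplit.mem_staircase.2 ⟨by simp; omega, by simp; omega⟩
      have hkey := hcol _ hst1 hst2
      simp only at hkey
      rw [show m - 1 - (s + 1) + 1 = m - 1 - s from by omega] at hkey
      have hb := hbij0.mapsTo (Finset.mem_coe.mpr
        (SSplit.mem_staircase.2 (⟨by omega, by omega⟩ : m - 1 - s ≤ m - 1 - r ∧ m - 1 - r < m)))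
      simp only [Set.mem_Icc] at hb
      omega
    · rintro ⟨r, s⟩ hc hc'
      rw [hT2]
      simp only
      rw [if_pos hc, if_pos hc']
      have h2 := (mem_S2 r s).1 hc
      have h2' := (mem_S2 (r + 1) s).1 hc'
      have hst1 : (m - 1 - s, m - 1 - (r + 1)) ∈ shiftedCells (stair m) :=
        SSplit.mem_staircase.2 ⟨by omega, by omega⟩
      have hst2 : ((m - 1 - s, m - 1 - (r + 1)).1, (m - 1 - s, m - 1 - (r + 1)).2 + 1) ∈
          shiftedCells (stair m) := SSplit.mem_staircase.2 ⟨by simp; omega, by simp; omega⟩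
      have hkey := hrow _ hst1 hst2
      simp only at hkey
      rw [show m - 1 - (r + 1) + 1 = m - 1 - r from by omega] at hkey
      have hb := hbij0.mapsTo (Finset.mem_coe.mpr
        (SSplit.mem_staircase.2 (⟨by omega, by omega⟩ : m - 1 - s ≤ m - 1 - r ∧ m - 1 - r < m)))
      simp only [Set.mem_Icc] at hb
      omega
  -- the key complementary count
  have hphi : ∀ v, 1 ≤ v → SSplit.phi m S1 v + SSplit.phi m S2 v = m + 1 - v := by
    intro v hv
    rw [SSplit.phi_restrict hlow1 hv, SSplit.phi_restrict hlow2 hv]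
    have hcount : ((Finset.range (m + 1 - v)).filter fun r => (r, r + v - 1) ∈ S2).card
        = ((Finset.range (m + 1 - v)).filter fun i => (i, i + v - 1) ∉ S1).card := by
      apply Finset.card_bij' (fun r _ => m + 1 - v - 1 - r) (fun i _ => m + 1 - v - 1 - i)
      · intro r hr
        simp only [Finset.mem_filter, Finset.mem_range] at hr ⊢
        obtain ⟨hrn, hrS⟩ := hr
        refine ⟨by omega, ?_⟩
        rw [mem_S2] at hrS
        obtain ⟨hx1, hx2, hT'⟩ := hrS
        rw [show m - 1 - (r + v - 1) = m + 1 - v - 1 - r from by omega,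
          show m - 1 - r = m + 1 - v - 1 - r + v - 1 from by omega] at hT'
        intro hmem
        rw [mem_S1] at hmem
        omega
      · intro i hi
        simp only [Finset.mem_filter, Finset.mem_range] at hi ⊢
        obtain ⟨hin, hiS⟩ := hi
        refine ⟨by omega, ?_⟩
        rw [mem_S2]
        refine ⟨by omega, by omega, ?_⟩
        rw [show m - 1 - (m + 1 - v - 1 - i + v - 1) = i from by omega,
          show m - 1 - (m + 1 - v - 1 - i) = i + v - 1 from by omega]
        rw [mem_S1] at hiS
        omega
      · intro r hr
        simp only [Finset.mem_filter, Finset.mem_range] at hr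
        omega
      · intro i hi
        simp only [Finset.mem_filter, Finset.mem_range] at hi
        omega
    have hsplit := Finset.card_filter_add_card_filter_not
      (s := Finset.range (m + 1 - v)) (fun i => (i, i + v - 1) ∈ S1)
    simp only [Finset.card_range] at hsplit
    rw [hcount]
    omega
  refine ⟨SSplit.partsList m S1, SSplit.partsList m S2, ?_, ?_, ?_, ?_,
    SSplit.eq_shiftedCells hlow1, SSplit.eq_shiftedCells hlow2, hSYT1, hSYT2, ?_, ?_⟩
  · intro i j hij hj
    rw [SSplit.partsList_length] at hj
    rw [SSplit.partsList_getD hj, SSplit.partsList_getD (lt_trans hij hj)]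
    exact SSplit.rowLen_lt hlow1 hij ((SSplit.lt_nrows_iff hlow1 j).1 hj)
  · intro i hi
    rw [SSplit.partsList_length] at hi
    rw [SSplit.partsList_getD hi]
    exact Nat.pos_of_ne_zero ((SSplit.lt_nrows_iff hlow1 i).1 hi)
  · intro i j hij hj
    rw [SSplit.partsList_length] at hj
    rw [SSplit.partsList_getD hj, SSplit.partsList_getD (lt_trans hij hj)]
    exact SSplit.rowLen_lt hlow2 hij ((SSplit.lt_nrows_iff hlow2 j).1 hj)
  · intro i hi
    rw [SSplit.partsList_length] at hi
    rw [SSplit.partsList_getD hi]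
    exact Nat.pos_of_ne_zero ((SSplit.lt_nrows_iff hlow2 i).1 hi)
  · rw [Finset.disjoint_left]
    intro v hv1 hv2
    rw [SSplit.mem_parts_iff hlow1] at hv1
    rw [SSplit.mem_parts_iff hlow2] at hv2
    obtain ⟨hva, hvb⟩ := hv1
    obtain ⟨-, hvc⟩ := hv2
    have h1 := hphi v hva
    have h2 := hphi (v + 1) (by omega)
    omega
  · ext v
    simp only [Finset.mem_union, Finset.mem_Icc]
    constructor
    · rintro (hv | hv)
      · exact SSplit.mem_parts_le hlow1 hv
      · exact SSplit.mem_parts_le hlow2 hv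
    · rintro ⟨h1v, hvm⟩
      rw [SSplit.mem_parts_iff hlow1, SSplit.mem_parts_iff hlow2]
      have h1 := hphi v h1v
      have h2 := hphi (v + 1) (by omega)
      have hmono := SSplit.phi_mono hlow1 h1v
      have hb2 := SSplit.phi_le hlow1 (show (1:ℕ) ≤ v + 1 by omega)
      by_cases hcc : SSplit.phi m S1 (v + 1) < SSplit.phi m S1 v
      · exact Or.inl ⟨h1v, hcc⟩
      · exact Or.inr ⟨h1v, by omega⟩
end

section
/- For any nonnegative integers m and t with t ≤ binomial(m+1,2), the sum over strict partitions λ contained (as sets) in {1,...,m} with |λ| = t of g^λ * g^{λᶜ} equals g^{[m]}, where λᶜ is the set complement of λ in {1,...,m}. In particular, this sum is independent of t. -/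
open Finset

section AuxSCS


/-- Number of parts of `s` greater than `d`. -/
def As (s : Finset ℕ) (d : ℕ) : ℕ := (s.filter (fun x => d < x)).card

lemma As_step (s : Finset ℕ) (d : ℕ) :
    As s d = As s (d+1) + (if d+1 ∈ s then 1 else 0) := by
  classical
  have h : s.filter (fun x => d < x)
      = s.filter (fun x => d+1 < x) ∪ s.filter (fun x => x = d+1) := by
    ext y; by_cases hy : y ∈ s <;> simp [hy] <;> omega
  have hdisj : Disjoint (s.filter (fun x => d+1 < x)) (s.filter (fun x => x = d+1)) := by
    simp only [disjoint_left, mem_filter]; omega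
  have h2 : (s.filter (fun x => x = d+1)).card = if d+1 ∈ s then 1 else 0 := by
    split <;> rename_i hmem
    · have : s.filter (fun x => x = d+1) = {d+1} := by
        ext y; simp only [mem_filter, mem_singleton]
        exact ⟨fun h => h.2, fun h => ⟨h ▸ hmem, h⟩⟩
      rw [this, card_singleton]
    · have : s.filter (fun x => x = d+1) = ∅ := by
        ext y; simp only [mem_filter, notMem_empty, iff_false, not_and]
        rintro hy rfl; exact hmem hy
      rw [this, card_empty]
  rw [As, h, card_union_of_disjoint hdisj, h2, As]

lemma As_antitone (s : Finset ℕ) {d e : ℕ} (h : d ≤ e) : As s e ≤ As s d :=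
  card_le_card (fun x hx => by
    simp only [mem_filter] at *; exact ⟨hx.1, lt_of_le_of_lt h hx.2⟩)

lemma As_Icc (m d : ℕ) : As (Icc 1 m) d = m - d := by
  have : (Icc 1 m).filter (fun x => d < x) = Icc (d+1) m := by
    ext x; simp only [mem_filter, mem_Icc]; omega
  rw [As, this, Nat.card_Icc]; omega

lemma As_le (s : Finset ℕ) (m d : ℕ) (hs : s ⊆ Icc 1 m) : As s d ≤ m - d := by
  rw [← As_Icc m d]
  exact card_le_card (filter_subset_filter _ hs)

lemma As_sdiff (s : Finset ℕ) (m d : ℕ) (hs : s ⊆ Icc 1 m) :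
    As (Icc 1 m \ s) d = (m - d) - As s d := by
  classical
  have h : (Icc 1 m \ s).filter (fun x => d < x)
      = (Icc 1 m).filter (fun x => d < x) \ s.filter (fun x => d < x) := by
    ext x; simp only [mem_filter, mem_sdiff]; tauto
  rw [As, h, card_sdiff_of_subset (filter_subset_filter _ hs), ← As, ← As, As_Icc]

/-- A downward-closed finset of naturals bounded below by `b` is an interval. -/
lemma downset_eq_Ico (J : Finset ℕ) (b : ℕ) (hb : ∀ j ∈ J, b ≤ j)
    (hstep : ∀ j, b ≤ j → j + 1 ∈ J → j ∈ J) : J = Finset.Ico b (b + J.card) := by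
  classical
  have hdown : ∀ d j, j ∈ J → b ≤ j - d → j - d ∈ J := by
    intro d
    induction d with
    | zero => intro j hj _; simpa using hj
    | succ d ih =>
      intro j hj hb'
      have hbj := hb j hj
      by_cases hcase : b ≤ j - d
      · have hJd := ih j hj hcase
        by_cases h2 : j - d = b
        · have h3 : j - (d+1) < b ∨ j - (d+1) = j - d := by omega
          rcases h3 with h3 | h3
          · omega
          · rw [h3]; exact hJd
        · have h4 : (j - (d+1)) + 1 = j - d := by omega
          apply hstep _ hb'
          rw [h4]; exact hJd
      · omega
  have hIcc : ∀ j ∈ J, Finset.Icc b j ⊆ J := by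
    intro j hj k hk
    simp only [mem_Icc] at hk
    have h5 : k = j - (j - k) := by omega
    rw [h5]; exact hdown _ _ hj (by omega)
  rcases J.eq_empty_or_nonempty with rfl | hne
  · simp
  · have hmax := J.max'_mem hne
    have hJeq : J = Finset.Icc b (J.max' hne) := by
      apply Finset.Subset.antisymm
      · intro j hj; simp only [mem_Icc]; exact ⟨hb j hj, J.le_max' j hj⟩
      · exact hIcc _ hmax
    have hcard : J.card = J.max' hne + 1 - b := by
      conv_lhs => rw [hJeq]
      rw [Nat.card_Icc]
    have hble : b ≤ J.max' hne := hb _ hmax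
    rw [hcard]
    conv_lhs => rw [hJeq]
    have h6 : b + (J.max' hne + 1 - b) = J.max' hne + 1 := by omega
    rw [h6, Finset.Ico_add_one_right_eq_Icc]

/-- Counting elements greater than `v` in a strictly descending sorted list. -/
lemma sorted_count_gt (l : List ℕ) (hl : l.Pairwise (· > ·)) (i v : ℕ) :
    (i < l.length ∧ v < l.getD i 0) ↔ i < (l.filter (fun x => decide (v < x))).length := by
  induction l generalizing i with
  | nil => simp
  | cons a tl ih =>
    have htl : tl.Pairwise (· > ·) := hl.of_cons
    have ha : ∀ x ∈ tl, x < a := fun x hx => List.rel_of_pairwise_cons hl hx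
    by_cases hva : v < a
    · have hfc : (a :: tl).filter (fun x => decide (v < x))
          = a :: tl.filter (fun x => decide (v < x)) := by
        simp [List.filter_cons, hva]
      rw [hfc]
      cases i with
      | zero => simp [hva]
      | succ i =>
        simp only [List.length_cons, List.getD_cons_succ, Nat.succ_lt_succ_iff]
        exact ih htl i
    · have hfil : (a :: tl).filter (fun x => decide (v < x)) = [] := by
        rw [List.filter_eq_nil_iff]
        intro x hx
        simp only [List.mem_cons] at hx
        rcases hx with rfl | hx
        · simpa using hva
        · have := ha x hx; simp only [decide_eq_true_eq]; omega
      rw [hfil]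
      simp only [List.length_nil, Nat.not_lt_zero, iff_false, not_and]
      intro hi
      cases i with
      | zero => simpa using hva
      | succ i =>
        simp only [List.getD_cons_succ]
        simp only [List.length_cons, Nat.succ_lt_succ_iff] at hi
        have hmem : tl.getD i 0 ∈ tl := by
          rw [List.getD_eq_getElem _ _ hi]
          exact List.getElem_mem hi
        have := ha _ hmem
        omega

lemma sortDesc_sorted (s : Finset ℕ) : (sortDesc s).Pairwise (· > ·) := by
  rw [sortDesc, List.pairwise_reverse]
  exact ((s.pairwise_sort (· ≤ ·)).and (s.sort_nodup (· ≤ ·))).imp fun h => lt_of_le_of_ne h.1 h.2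

lemma sortDesc_nodup (s : Finset ℕ) : (sortDesc s).Nodup := by
  rw [sortDesc, List.nodup_reverse]; exact s.sort_nodup _

lemma mem_sortDesc {s : Finset ℕ} {x : ℕ} : x ∈ sortDesc s ↔ x ∈ s := by
  rw [sortDesc, List.mem_reverse, Finset.mem_sort]

lemma sortDesc_toFinset (s : Finset ℕ) : (sortDesc s).toFinset = s := by
  ext x; rw [List.mem_toFinset, mem_sortDesc]

lemma length_filter_sortDesc (s : Finset ℕ) (v : ℕ) :
    ((sortDesc s).filter (fun x => decide (v < x))).length = As s v := by
  classical
  have hnd : ((sortDesc s).filter (fun x => decide (v < x))).Nodup :=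
    (sortDesc_nodup s).filter _
  rw [← List.toFinset_card_of_nodup hnd, List.toFinset_filter, sortDesc_toFinset, As]
  congr 1
  apply Finset.filter_congr
  intro x _; simp

lemma length_sortDesc (s : Finset ℕ) : (sortDesc s).length = s.card := by
  rw [sortDesc, List.length_reverse, Finset.length_sort]

lemma mem_shiftedCells_sortDesc_aux (s : Finset ℕ) (i j : ℕ) :
    (i, j) ∈ shiftedCells (sortDesc s) ↔ i ≤ j ∧ i < As s (j - i) := by
  classical
  rw [shiftedCells, mem_biUnion]
  constructor
  · rintro ⟨a, ha, hmem⟩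
    rw [mem_image] at hmem
    obtain ⟨b, hb, heq⟩ := hmem
    rw [mem_range] at ha hb
    have hia : a = i := congrArg Prod.fst heq
    have hjb : a + b = j := congrArg Prod.snd heq
    subst hia; subst hjb
    have h1 := (sorted_count_gt (sortDesc s) (sortDesc_sorted s) a b).1 ⟨ha, hb⟩
    rw [length_filter_sortDesc] at h1
    have hab : a + b - a = b := by omega
    rw [hab]
    exact ⟨Nat.le_add_right a b, h1⟩
  · rintro ⟨hij, hA⟩
    rw [← length_filter_sortDesc] at hA
    have h2 := (sorted_count_gt (sortDesc s) (sortDesc_sorted s) i (j - i)).2 hA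
    refine ⟨i, by rw [mem_range]; exact h2.1, ?_⟩
    rw [mem_image]
    refine ⟨j - i, by rw [mem_range]; exact h2.2, ?_⟩
    have : i + (j - i) = j := by omega
    rw [this]

noncomputable abbrev Dd (s : Finset ℕ) : Finset (ℕ × ℕ) := shiftedCells (sortDesc s)

def rho (m : ℕ) (c : ℕ × ℕ) : ℕ × ℕ := (m - 1 - c.2, m - 1 - c.1)

lemma mem_shiftedCells_sortDesc (s : Finset ℕ) (i j : ℕ) :
    (i, j) ∈ Dd s ↔ i ≤ j ∧ i < As s (j - i) := mem_shiftedCells_sortDesc_aux s i j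
/-- abbreviation for the shifted diagram of a strict partition given as a finset -/
lemma sum_getD (l : List ℕ) : ∑ i ∈ range l.length, l.getD i 0 = l.sum := by
  induction l with
  | nil => simp
  | cons a tl ih =>
    rw [List.length_cons, Finset.sum_range_succ', List.sum_cons, ← ih]
    simp [Nat.add_comm]

lemma card_shiftedCells (L : List ℕ) : (shiftedCells L).card = L.sum := by
  classical
  rw [shiftedCells, card_biUnion]
  · rw [← sum_getD]
    apply Finset.sum_congr rfl
    intro i _
    rw [card_image_of_injective _ (by intro x y h; simpa using h), card_range]
  · intro i _ j _ hij
    simp only [disjoint_left, mem_image, mem_range]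
    rintro ⟨a, b⟩ ⟨x, hx, hxe⟩ ⟨y, hy, hye⟩
    have : i = a := (Prod.mk.injEq _ _ _ _ ▸ hxe).1
    have : j = a := (Prod.mk.injEq _ _ _ _ ▸ hye).1
    omega

lemma card_Dd (s : Finset ℕ) : (Dd s).card = s.sum id := by
  rw [card_shiftedCells, sortDesc, List.sum_reverse]
  have h := Finset.sum_map_toList s id
  rw [List.map_id] at h
  rw [← h]
  exact List.Perm.sum_eq (Finset.sort_perm_toList s _)

lemma mem_triangle (m i j : ℕ) : (i, j) ∈ Dd (Icc 1 m) ↔ i ≤ j ∧ j < m := by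
  rw [mem_shiftedCells_sortDesc, As_Icc]; omega

lemma Dd_subset_triangle {m : ℕ} {s : Finset ℕ} (hs : s ⊆ Icc 1 m) :
    Dd s ⊆ Dd (Icc 1 m) := by
  rintro ⟨i, j⟩ h
  rw [mem_shiftedCells_sortDesc] at h
  have := As_le s m (j - i) hs
  rw [mem_triangle]; omega

lemma rho_invol {m i j : ℕ} (hij : i ≤ j) (hj : j < m) : rho m (rho m (i, j)) = (i, j) := by
  simp only [rho]
  exact Prod.ext (by omega) (by omega)

lemma rho_mem_triangle {m i j : ℕ} (h : (i, j) ∈ Dd (Icc 1 m)) :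
    rho m (i, j) ∈ Dd (Icc 1 m) := by
  rw [mem_triangle] at h ⊢
  simp only [rho]; omega

lemma reflect_compl {m : ℕ} {s : Finset ℕ} (hs : s ⊆ Icc 1 m) :
    (Dd (Icc 1 m) \ Dd s).image (rho m) = Dd (Icc 1 m \ s) := by
  ext ⟨i, j⟩
  simp only [mem_image, mem_sdiff]
  constructor
  · rintro ⟨⟨a, b⟩, ⟨hab1, hab2⟩, heq⟩
    rw [mem_triangle] at hab1
    rw [mem_shiftedCells_sortDesc] at hab2
    have hA := As_le s m (b - a) hs
    have hAc := As_sdiff s m (b - a) hs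
    simp only [rho] at heq
    have h1 : m - 1 - b = i := (Prod.mk.injEq _ _ _ _ ▸ heq).1
    have h2 : m - 1 - a = j := (Prod.mk.injEq _ _ _ _ ▸ heq).2
    rw [mem_shiftedCells_sortDesc]
    have harg : j - i = b - a := by omega
    rw [harg, hAc]
    omega
  · intro h
    have hmem := Dd_subset_triangle (Finset.sdiff_subset) h
    rw [mem_triangle] at hmem
    rw [mem_shiftedCells_sortDesc, As_sdiff s m (j - i) hs] at h
    have hA := As_le s m (j - i) hs
    refine ⟨(m - 1 - j, m - 1 - i), ⟨?_, ?_⟩, ?_⟩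
    · rw [mem_triangle]; omega
    · rw [mem_shiftedCells_sortDesc]
      have harg : (m - 1 - i) - (m - 1 - j) = j - i := by omega
      rw [harg]
      omega
    · simp only [rho]
      exact Prod.ext (by omega) (by omega)

lemma Dd_inj {m : ℕ} {s s' : Finset ℕ} (hs : s ⊆ Icc 1 m) (hs' : s' ⊆ Icc 1 m)
    (h : Dd s = Dd s') : s = s' := by
  have hAs : ∀ d, As s d = As s' d := by
    intro d
    have key : ∀ a, a < As s d ↔ a < As s' d := by
      intro a
      have e1 : (a, a + d) ∈ Dd s ↔ a ≤ a + d ∧ a < As s (a + d - a) :=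
        mem_shiftedCells_sortDesc s a (a + d)
      have e2 : (a, a + d) ∈ Dd s' ↔ a ≤ a + d ∧ a < As s' (a + d - a) :=
        mem_shiftedCells_sortDesc s' a (a + d)
      have harg : a + d - a = d := by omega
      rw [harg] at e1 e2
      rw [h] at e1
      constructor
      · intro ha; exact (e2.1 (e1.2 ⟨by omega, ha⟩)).2
      · intro ha; exact (e1.1 (e2.2 ⟨by omega, ha⟩)).2
    have h1 := key (As s d)
    have h2 := key (As s' d)
    omega
  ext x
  rcases Nat.eq_zero_or_pos x with rfl | hx
  · constructor
    · intro hmem; have := hs hmem; rw [mem_Icc] at this; omega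
    · intro hmem; have := hs' hmem; rw [mem_Icc] at this; omega
  · have h1 := As_step s (x - 1)
    have h2 := As_step s' (x - 1)
    have hxx : x - 1 + 1 = x := by omega
    rw [hxx] at h1 h2
    have := hAs (x - 1)
    have := hAs x
    by_cases hm : x ∈ s <;> by_cases hm' : x ∈ s' <;> simp [hm, hm'] at h1 h2 ⊢ <;> omega

lemma sum_Icc_id (m : ℕ) : (Icc 1 m).sum id = (m + 1).choose 2 := by
  induction m with
  | zero => simp
  | succ n ih =>
    have hins : Icc 1 (n + 1) = insert (n + 1) (Icc 1 n) := by
      ext x; simp only [mem_Icc, mem_insert]; omega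
    rw [hins, Finset.sum_insert (by rw [mem_Icc]; omega), ih]
    have : (n + 2).choose 2 = (n + 1).choose 1 + (n + 1).choose 2 := Nat.choose_succ_succ _ _
    rw [this, Nat.choose_one_right]
    simp [id]
instance instFiniteSYT (S : Finset (ℕ × ℕ)) : Finite {T : ℕ × ℕ → ℕ // IsSYT S T} := by
  classical
  have key : ∀ T : {T : ℕ × ℕ → ℕ // IsSYT S T}, ∀ c : {x // x ∈ S}, T.1 c.1 < S.card + 1 := by
    intro T c
    have := T.2.1.mapsTo c.2
    simp only [Set.mem_Icc] at this
    omega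
  apply Finite.of_injective (fun T => (fun c : {x // x ∈ S} => (⟨T.1 c.1, key T c⟩ : Fin (S.card + 1))))
  intro T₁ T₂ h
  apply Subtype.ext
  funext c
  by_cases hc : c ∈ S
  · have := congrFun h ⟨c, hc⟩
    simpa using this
  · rw [T₁.2.2.1 c hc, T₂.2.2.1 c hc]

lemma nat_card_sigma {ι : Type*} [Fintype ι] {β : ι → Type*} [∀ i, Finite (β i)] :
    Nat.card (Σ i, β i) = ∑ i, Nat.card (β i) := by
  classical
  haveI : ∀ i, Fintype (β i) := fun i => Fintype.ofFinite _
  simp_rw [Nat.card_eq_fintype_card]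
  exact Fintype.card_sigma

lemma nat_card_fiber_sum {α ι : Type*} [DecidableEq ι] (p : α → Prop) [Finite {a // p a}]
    (f : α → ι) (F : Finset ι) (h : ∀ a, p a → f a ∈ F) :
    Nat.card {a // p a} = ∑ i ∈ F, Nat.card {a // p a ∧ f a = i} := by
  classical
  haveI hfib : ∀ i : F, Finite {a // p a ∧ f a = i.1} := by
    intro i
    apply Finite.of_injective (fun x : {a // p a ∧ f a = i.1} => (⟨x.1, x.2.1⟩ : {a // p a}))
    intro a b hab
    have h2 : a.1 = b.1 := congrArg (Subtype.val : {a // p a} → α) hab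
    exact Subtype.ext h2
  have e : {a // p a} ≃ Σ i : F, {a // p a ∧ f a = i.1} :=
    { toFun := fun a => ⟨⟨f a.1, h a.1 a.2⟩, ⟨a.1, a.2, rfl⟩⟩
      invFun := fun x => ⟨x.2.1, x.2.2.1⟩
      left_inv := fun a => rfl
      right_inv := by rintro ⟨⟨i, hi⟩, ⟨a, ha, hfa⟩⟩; obtain rfl : f a = i := hfa; rfl }
  rw [Nat.card_congr e, nat_card_sigma, ← Finset.sum_coe_sort F (fun i => Nat.card {a // p a ∧ f a = i})]
lemma extraction (m t : ℕ) (ht : t ≤ (Icc 1 m).sum id) (T : ℕ × ℕ → ℕ)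
    (hT : IsSYT (Dd (Icc 1 m)) T) :
    ∃ s : Finset ℕ, s ⊆ Icc 1 m ∧ s.sum id = t ∧
      (Dd (Icc 1 m)).filter (fun c => T c ≤ t) = Dd s := by
  classical
  obtain ⟨hbij, hzero, hrow, hcol⟩ := hT
  set Δ := Dd (Icc 1 m) with hΔ
  have hNcard : Δ.card = (Icc 1 m).sum id := card_Dd _
  set U := Δ.filter (fun c => T c ≤ t) with hUdef
  have hUΔ : U ⊆ Δ := filter_subset _ _
  have hmemU : ∀ c, c ∈ U ↔ c ∈ Δ ∧ T c ≤ t := fun c => mem_filter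
  -- row sets
  set J : ℕ → Finset ℕ := fun i => (range m).filter (fun j => (i, j) ∈ U) with hJdef
  set a : ℕ → ℕ := fun i => (J i).card with hadef
  have hmemJ : ∀ i j, j ∈ J i ↔ (i, j) ∈ U := by
    intro i j
    simp only [hJdef, mem_filter, mem_range]
    constructor
    · exact fun h => h.2
    · intro h
      refine ⟨?_, h⟩
      have := hUΔ h
      rw [hΔ, mem_triangle] at this
      omega
  have hJIco : ∀ i, J i = Finset.Ico i (i + a i) := by
    intro i
    apply downset_eq_Ico
    · intro j hj
      have := hUΔ ((hmemJ i j).1 hj)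
      rw [hΔ, mem_triangle] at this
      exact this.1
    · intro j hij hj1
      rw [hmemJ] at hj1 ⊢
      rw [hmemU] at hj1 ⊢
      have hj1Δ := hj1.1
      have hjm : j + 1 < m := by rw [hΔ, mem_triangle] at hj1Δ; omega
      have hjΔ : (i, j) ∈ Δ := by rw [hΔ, mem_triangle]; omega
      refine ⟨hjΔ, ?_⟩
      have h5 : T (i, j) < T (i, j + 1) := hrow (i, j) hjΔ hj1Δ
      omega
  have hU' : ∀ i j, (i, j) ∈ U ↔ i ≤ j ∧ j - i < a i := by
    intro i j
    rw [← hmemJ, hJIco, Finset.mem_Ico]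
    omega
  have ha0 : ∀ i, m ≤ i → a i = 0 := by
    intro i hi
    rw [hadef]
    simp only
    rw [Finset.card_eq_zero]
    ext j
    simp only [hJdef, mem_filter, mem_range, notMem_empty, iff_false, not_and]
    intro _ hj
    have := hUΔ hj
    rw [hΔ, mem_triangle] at this
    omega
  have ham : ∀ i, a i ≤ m := by
    intro i
    calc a i ≤ (range m).card := card_le_card (filter_subset _ _)
    _ = m := card_range m
  have hdec : ∀ i, a (i + 1) ≠ 0 → a (i + 1) < a i := by
    intro i hne
    have h1 : (i + 1, (i + 1) + (a (i + 1) - 1)) ∈ U := by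
      rw [hU']; omega
    have hj : (i + 1) + (a (i + 1) - 1) = i + a (i + 1) := by omega
    rw [hj] at h1
    have h1Δ := hUΔ h1
    have h2Δ : (i, i + a (i + 1)) ∈ Δ := by
      rw [hΔ, mem_triangle] at h1Δ ⊢
      omega
    have hlt : T (i, i + a (i + 1)) < T (i + 1, i + a (i + 1)) := hcol (i, i + a (i + 1)) h2Δ h1Δ
    have h2 : (i, i + a (i + 1)) ∈ U := by
      rw [hmemU] at h1 ⊢
      exact ⟨h2Δ, by omega⟩
    rw [hU'] at h2
    omega
  have hmono : ∀ k i, a (i + k + 1) ≠ 0 → a (i + k + 1) < a i := by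
    intro k
    induction k with
    | zero => intro i h; exact hdec i h
    | succ k ih =>
      intro i h
      have e : i + (k + 1) + 1 = (i + 1) + k + 1 := by omega
      rw [e] at h ⊢
      have h1 := ih (i + 1) h
      have h2 : a (i + 1) ≠ 0 := by omega
      have h3 := hdec i h2
      omega
  have hmono' : ∀ i j, i < j → a j ≠ 0 → a j < a i := by
    intro i j hij hj
    have e : j = i + (j - i - 1) + 1 := by omega
    rw [e] at hj ⊢
    exact hmono _ i hj
  -- the strict partition
  set s : Finset ℕ := ((range m).filter (fun i => a i ≠ 0)).image a with hsdef
  have hinj : ∀ x ∈ (range m).filter (fun i => a i ≠ 0),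
      ∀ y ∈ (range m).filter (fun i => a i ≠ 0), a x = a y → x = y := by
    intro x hx y hy hxy
    simp only [mem_filter] at hx hy
    rcases lt_trichotomy x y with h | h | h
    · have := hmono' x y h hy.2; omega
    · exact h
    · have := hmono' y x h hx.2; omega
  have hAs_eq : ∀ d, As s d = ((range m).filter (fun i => d < a i)).card := by
    intro d
    have himg : s.filter (fun x => d < x) = ((range m).filter (fun i => d < a i)).image a := by
      ext x
      simp only [hsdef, mem_filter, mem_image, mem_range]
      constructor
      · rintro ⟨⟨i, ⟨hi, hne⟩, rfl⟩, hd⟩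
        exact ⟨i, ⟨hi, hd⟩, rfl⟩
      · rintro ⟨i, ⟨hi, hd⟩, rfl⟩
        exact ⟨⟨i, ⟨hi, by omega⟩, rfl⟩, hd⟩
    rw [As, himg, card_image_of_injOn]
    intro x hx y hy hxy
    simp only [Finset.mem_coe, mem_filter, mem_range] at hx hy
    exact hinj x (by rw [mem_filter, mem_range]; exact ⟨hx.1, by omega⟩)
      y (by rw [mem_filter, mem_range]; exact ⟨hy.1, by omega⟩) hxy
  have hlow : ∀ d, (range m).filter (fun i => d < a i)
      = range (((range m).filter (fun i => d < a i)).card) := by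
    intro d
    have hd := downset_eq_Ico ((range m).filter (fun i => d < a i)) 0
      (fun j _ => Nat.zero_le j) ?_
    · rw [Nat.zero_add] at hd
      calc (range m).filter (fun i => d < a i) = Ico 0 (((range m).filter (fun i => d < a i)).card) := hd
        _ = range (((range m).filter (fun i => d < a i)).card) := by rw [← Finset.range_eq_Ico]
    · intro j _ hj1
      rw [mem_filter, mem_range] at hj1 ⊢
      have hne : a (j + 1) ≠ 0 := by omega
      have := hdec j hne
      constructor <;> omega
  have key : ∀ i d, d < a i ↔ i < As s d := by
    intro i d
    rw [hAs_eq]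
    have hmem := Finset.ext_iff.mp (hlow d) i
    rw [mem_filter, mem_range, mem_range] at hmem
    constructor
    · intro h
      have him : i < m := by
        by_contra hc
        push_neg at hc
        have := ha0 i hc
        omega
      exact hmem.1 ⟨him, h⟩
    · intro h
      exact (hmem.2 h).2
  have hUDs : U = Dd s := by
    ext ⟨i, j⟩
    rw [hU', mem_shiftedCells_sortDesc]
    constructor
    · rintro ⟨h1, h2⟩; exact ⟨h1, (key i (j - i)).1 h2⟩
    · rintro ⟨h1, h2⟩; exact ⟨h1, (key i (j - i)).2 h2⟩
  have hssub : s ⊆ Icc 1 m := by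
    intro x hx
    rw [hsdef, mem_image] at hx
    obtain ⟨i, hi, rfl⟩ := hx
    rw [mem_filter] at hi
    have := ham i
    rw [mem_Icc]
    omega
  -- U.card = t
  have hUcard : U.card = t := by
    have hbijU : Set.BijOn T ↑U (Set.Icc 1 t) := by
      refine ⟨?_, hbij.injOn.mono (Finset.coe_subset.mpr hUΔ), ?_⟩
      · intro c hc
        rw [Finset.mem_coe, hmemU] at hc
        have := hbij.mapsTo (Finset.mem_coe.mpr hc.1)
        rw [Set.mem_Icc] at this ⊢
        omega
      · intro v hv
        rw [Set.mem_Icc] at hv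
        have hv' : v ∈ Set.Icc 1 Δ.card := by rw [Set.mem_Icc]; omega
        obtain ⟨c, hc, rfl⟩ := hbij.surjOn hv'
        refine ⟨c, ?_, rfl⟩
        rw [Finset.mem_coe, hmemU]
        exact ⟨Finset.mem_coe.mp hc, hv.2⟩
    have h1 : T '' ↑U = Set.Icc 1 t := hbijU.image_eq
    have h2 : Set.ncard (T '' ↑U) = Set.ncard (↑U : Set (ℕ × ℕ)) :=
      Set.ncard_image_of_injOn hbijU.injOn
    have h3 : Set.ncard (Set.Icc 1 t) = t := by
      rw [← Finset.coe_Icc, Set.ncard_coe_finset, Nat.card_Icc]; omega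
    have h4 : Set.ncard (↑U : Set (ℕ × ℕ)) = U.card := Set.ncard_coe_finset U
    rw [h1, h3] at h2
    omega
  have hsum : s.sum id = t := by
    have h1 : s.sum id = ∑ i ∈ (range m).filter (fun i => a i ≠ 0), a i := by
      rw [hsdef, Finset.sum_image hinj]
      rfl
    have h2 : ∑ i ∈ (range m).filter (fun i => a i ≠ 0), a i = ∑ i ∈ range m, a i :=
      Finset.sum_filter_ne_zero _
    have h3 : U.card = ∑ i ∈ range m, (U.filter (fun c => c.1 = i)).card := by
      apply Finset.card_eq_sum_card_fiberwise
      intro c hc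
      have := hUΔ hc
      rw [hΔ, mem_triangle (m := m) c.1 c.2] at this
      · rw [Finset.mem_coe, mem_range]; omega
    have h4 : ∀ i, (U.filter (fun c => c.1 = i)).card = a i := by
      intro i
      have himg2 : U.filter (fun c => c.1 = i) = (J i).image (fun j => (i, j)) := by
        ext ⟨x, y⟩
        simp only [mem_filter, mem_image, hmemJ]
        constructor
        · rintro ⟨hU1, rfl⟩
          exact ⟨y, hU1, rfl⟩
        · rintro ⟨j, hj, heq⟩
          have e1 : i = x := (Prod.mk.injEq _ _ _ _ ▸ heq).1
          have e2 : j = y := (Prod.mk.injEq _ _ _ _ ▸ heq).2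
          subst e1; subst e2
          exact ⟨hj, rfl⟩
      rw [himg2, card_image_of_injective _ (fun x y hxy => (Prod.mk.injEq _ _ _ _ ▸ hxy).2)]
    rw [h1, h2]
    rw [Finset.sum_congr rfl (fun i _ => (h4 i).symm), ← h3, hUcard]
  exact ⟨s, hssub, hsum, hUDs⟩
lemma rho_mk (m i j : ℕ) : rho m (i, j) = (m - 1 - j, m - 1 - i) := rfl

lemma Dd_lower_row {s : Finset ℕ} {i j : ℕ} (h : (i, j + 1) ∈ Dd s) (hij : i ≤ j) :
    (i, j) ∈ Dd s := by
  rw [mem_shiftedCells_sortDesc] at h ⊢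
  have := As_antitone s (show j - i ≤ j + 1 - i by omega)
  exact ⟨hij, by omega⟩

lemma Dd_lower_col {s : Finset ℕ} {i j : ℕ} (h : (i + 1, j) ∈ Dd s) :
    (i, j) ∈ Dd s := by
  rw [mem_shiftedCells_sortDesc] at h ⊢
  have h1 : i + 1 ≤ j := h.1
  have hstep := As_step s (j - i - 1)
  have e : j - i - 1 + 1 = j - i := by omega
  rw [e] at hstep
  have hb : As s (j - i - 1) ≤ As s (j - i) + 1 := by rw [hstep]; split <;> omega
  have e2 : j - (i + 1) = j - i - 1 := by omega
  rw [e2] at h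
  exact ⟨by omega, by omega⟩

lemma fiber_card (m t N : ℕ) (hN : N = (Icc 1 m).sum id) (s : Finset ℕ)
    (hs : s ⊆ Icc 1 m) (hsum : s.sum id = t) :
    Nat.card {T : ℕ × ℕ → ℕ // IsSYT (Dd (Icc 1 m)) T ∧
        (Dd (Icc 1 m)).filter (fun c => T c ≤ t) = Dd s}
      = Nat.card {P : ℕ × ℕ → ℕ // IsSYT (Dd s) P}
        * Nat.card {Q : ℕ × ℕ → ℕ // IsSYT (Dd (Icc 1 m \ s)) Q} := by
  classical
  set Δ : Finset (ℕ × ℕ) := Dd (Icc 1 m) with hΔdef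
  set S₁ : Finset (ℕ × ℕ) := Dd s with hS₁def
  set S₂ : Finset (ℕ × ℕ) := Dd (Icc 1 m \ s) with hS₂def
  have hNΔ : Δ.card = N := by rw [hΔdef, card_Dd, hN]
  have htN : t ≤ N := by
    rw [hN, ← hsum]
    exact Finset.sum_le_sum_of_subset hs
  have hS₁Δ : S₁ ⊆ Δ := Dd_subset_triangle hs
  have hS₂Δ : S₂ ⊆ Δ := Dd_subset_triangle sdiff_subset
  have hS₁card : S₁.card = t := by rw [hS₁def, card_Dd, hsum]
  have hS₂card : S₂.card = N - t := by
    rw [hS₂def, card_Dd]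
    have h2 : (Icc 1 m \ s).sum id + s.sum id = (Icc 1 m).sum id := Finset.sum_sdiff hs
    omega
  have hRS : (Δ \ S₁).image (rho m) = S₂ := reflect_compl hs
  have hinvol : ∀ c ∈ Δ, rho m (rho m c) = c := by
    rintro ⟨i, j⟩ hc
    rw [hΔdef, mem_triangle] at hc
    rw [rho_mk, rho_mk]
    exact Prod.ext (by omega) (by omega)
  have hRS₂ : ∀ c ∈ Δ \ S₁, rho m c ∈ S₂ := by
    intro c hc
    rw [← hRS]
    exact mem_image_of_mem _ hc
  have hS₂R : ∀ c ∈ S₂, rho m c ∈ Δ \ S₁ := by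
    intro c hc
    rw [← hRS] at hc
    obtain ⟨r, hr, rfl⟩ := mem_image.mp hc
    rw [hinvol r (sdiff_subset hr)]
    exact hr
  -- forward direction part 1
  have forward₁ : ∀ T : ℕ × ℕ → ℕ, IsSYT Δ T → Δ.filter (fun c => T c ≤ t) = S₁ →
      IsSYT S₁ (fun c => if c ∈ S₁ then T c else 0) := by
    intro T hT hU
    obtain ⟨hbij, hzero, hrow, hcol⟩ := hT
    have hmemS₁ : ∀ c, c ∈ S₁ ↔ c ∈ Δ ∧ T c ≤ t := by
      intro c; rw [← hU, mem_filter]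
    refine ⟨?_, ?_, ?_, ?_⟩
    · rw [hS₁card]
      have hbijT : Set.BijOn T ↑S₁ (Set.Icc 1 t) := by
        refine ⟨?_, hbij.injOn.mono (Finset.coe_subset.mpr hS₁Δ), ?_⟩
        · intro c hc
          rw [Finset.mem_coe, hmemS₁] at hc
          have := hbij.mapsTo (Finset.mem_coe.mpr hc.1)
          rw [Set.mem_Icc] at this ⊢
          omega
        · intro v hv
          rw [Set.mem_Icc] at hv
          have hv' : v ∈ Set.Icc 1 Δ.card := by rw [Set.mem_Icc]; omega
          obtain ⟨c, hc, rfl⟩ := hbij.surjOn hv'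
          refine ⟨c, ?_, rfl⟩
          rw [Finset.mem_coe, hmemS₁]
          exact ⟨Finset.mem_coe.mp hc, hv.2⟩
      exact hbijT.congr (fun c hc => by simp [Finset.mem_coe.mp hc])
    · intro c hc; simp [hc]
    · intro c hc hc'
      simp only [if_pos hc, if_pos hc']
      exact hrow c (hS₁Δ hc) (hS₁Δ hc')
    · intro c hc hc'
      simp only [if_pos hc, if_pos hc']
      exact hcol c (hS₁Δ hc) (hS₁Δ hc')
  -- forward direction part 2
  have forward₂ : ∀ T : ℕ × ℕ → ℕ, IsSYT Δ T → Δ.filter (fun c => T c ≤ t) = S₁ →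
      IsSYT S₂ (fun c => if c ∈ S₂ then N + 1 - T (rho m c) else 0) := by
    intro T hT hU
    obtain ⟨hbij, hzero, hrow, hcol⟩ := hT
    have hmemS₁ : ∀ c, c ∈ S₁ ↔ c ∈ Δ ∧ T c ≤ t := by
      intro c; rw [← hU, mem_filter]
    have hTR : ∀ c ∈ S₂, t < T (rho m c) ∧ T (rho m c) ≤ N := by
      intro c hc
      have hr := hS₂R c hc
      rw [mem_sdiff] at hr
      have h1 := hbij.mapsTo (Finset.mem_coe.mpr hr.1)
      rw [Set.mem_Icc, hNΔ] at h1
      have h2 : ¬ (rho m c ∈ Δ ∧ T (rho m c) ≤ t) := fun h => hr.2 ((hmemS₁ _).mpr h)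
      push_neg at h2
      exact ⟨h2 hr.1, h1.2⟩
    refine ⟨?_, ?_, ?_, ?_⟩
    · rw [hS₂card]
      have hbijQ : Set.BijOn (fun c => N + 1 - T (rho m c)) ↑S₂ (Set.Icc 1 (N - t)) := by
        refine ⟨?_, ?_, ?_⟩
        · intro c hc
          have := hTR c (Finset.mem_coe.mp hc)
          show (N + 1 - T (rho m c)) ∈ Set.Icc 1 (N - t)
          rw [Set.mem_Icc]
          omega
        · intro c hc c' hc' heq
          rw [Finset.mem_coe] at hc hc'
          have b1 := hTR c hc
          have b2 := hTR c' hc'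
          have hTeq : T (rho m c) = T (rho m c') := by
            simp only at heq; omega
          have hrc := hS₂R c hc
          have hrc' := hS₂R c' hc'
          rw [mem_sdiff] at hrc hrc'
          have := hbij.injOn (Finset.mem_coe.mpr hrc.1) (Finset.mem_coe.mpr hrc'.1) hTeq
          calc c = rho m (rho m c) := (hinvol c (hS₂Δ hc)).symm
            _ = rho m (rho m c') := by rw [this]
            _ = c' := hinvol c' (hS₂Δ hc')
        · intro v hv
          rw [Set.mem_Icc] at hv
          have hv' : N + 1 - v ∈ Set.Icc 1 Δ.card := by rw [Set.mem_Icc, hNΔ]; omega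
          obtain ⟨c, hc, hceq⟩ := hbij.surjOn hv'
          rw [Finset.mem_coe] at hc
          have hcR : c ∈ Δ \ S₁ := by
            rw [mem_sdiff]
            refine ⟨hc, fun hmem => ?_⟩
            rw [hmemS₁] at hmem
            omega
          refine ⟨rho m c, Finset.mem_coe.mpr (hRS₂ c hcR), ?_⟩
          simp only
          rw [hinvol c hc, hceq]
          omega
      exact hbijQ.congr (fun c hc => by simp [Finset.mem_coe.mp hc])
    · intro c hc; simp [hc]
    · rintro ⟨i, j⟩ hc hc'
      have hc'' : (i, j + 1) ∈ S₂ := hc'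
      have hΔc : (i, j) ∈ Δ := hS₂Δ hc
      have hΔc' : (i, j + 1) ∈ Δ := hS₂Δ hc''
      rw [hΔdef, mem_triangle] at hΔc hΔc'
      have hx : m - 1 - j = (m - 1 - (j + 1)) + 1 := by omega
      have hcell : rho m (i, j) = ((m - 1 - (j + 1)) + 1, m - 1 - i) := by
        rw [rho_mk, hx]
      have hr1 := hS₂R _ hc''
      have hr2 := hS₂R _ hc
      rw [mem_sdiff] at hr1 hr2
      have hlt : T (m - 1 - (j + 1), m - 1 - i) < T ((m - 1 - (j + 1)) + 1, m - 1 - i) :=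
        hcol (m - 1 - (j + 1), m - 1 - i) hr1.1 (hcell ▸ hr2.1)
      have b1 := hTR _ hc
      have b2 := hTR _ hc''
      show (if (i, j) ∈ S₂ then N + 1 - T (rho m (i, j)) else 0)
        < (if (i, j + 1) ∈ S₂ then N + 1 - T (rho m (i, j + 1)) else 0)
      simp only [if_pos hc, if_pos hc'']
      have e1 : T (rho m (i, j)) = T ((m - 1 - (j + 1)) + 1, m - 1 - i) := congrArg T hcell
      have e2 : T (rho m (i, j + 1)) = T (m - 1 - (j + 1), m - 1 - i) := rfl
      rw [e1]
      rw [e2] at b2 ⊢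
      rw [e1] at b1
      omega
    · rintro ⟨i, j⟩ hc hc'
      have hc'' : (i + 1, j) ∈ S₂ := hc'
      have hΔc : (i, j) ∈ Δ := hS₂Δ hc
      have hΔc' : (i + 1, j) ∈ Δ := hS₂Δ hc''
      rw [hΔdef, mem_triangle] at hΔc hΔc'
      have hx : m - 1 - i = (m - 1 - (i + 1)) + 1 := by omega
      have hcell : rho m (i, j) = (m - 1 - j, (m - 1 - (i + 1)) + 1) := by
        rw [rho_mk, hx]
      have hr1 := hS₂R _ hc''
      have hr2 := hS₂R _ hc
      rw [mem_sdiff] at hr1 hr2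
      have hlt : T (m - 1 - j, m - 1 - (i + 1)) < T (m - 1 - j, (m - 1 - (i + 1)) + 1) :=
        hrow (m - 1 - j, m - 1 - (i + 1)) hr1.1 (hcell ▸ hr2.1)
      have b1 := hTR _ hc
      have b2 := hTR _ hc''
      show (if (i, j) ∈ S₂ then N + 1 - T (rho m (i, j)) else 0)
        < (if (i + 1, j) ∈ S₂ then N + 1 - T (rho m (i + 1, j)) else 0)
      simp only [if_pos hc, if_pos hc'']
      have e1 : T (rho m (i, j)) = T (m - 1 - j, (m - 1 - (i + 1)) + 1) := congrArg T hcell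
      have e2 : T (rho m (i + 1, j)) = T (m - 1 - j, m - 1 - (i + 1)) := rfl
      rw [e1]
      rw [e2] at b2 ⊢
      rw [e1] at b1
      omega
  -- backward direction
  have backward : ∀ P Q : ℕ × ℕ → ℕ, IsSYT S₁ P → IsSYT S₂ Q →
      IsSYT Δ (fun c => if c ∈ S₁ then P c else if c ∈ Δ then N + 1 - Q (rho m c) else 0) ∧
      Δ.filter (fun c =>
        (if c ∈ S₁ then P c else if c ∈ Δ then N + 1 - Q (rho m c) else 0) ≤ t) = S₁ := by
    intro P Q hP hQ
    obtain ⟨hPbij, hPzero, hProw, hPcol⟩ := hP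
    obtain ⟨hQbij, hQzero, hQrow, hQcol⟩ := hQ
    have hPbij' : Set.BijOn P ↑S₁ (Set.Icc 1 t) := hS₁card ▸ hPbij
    have hQbij' : Set.BijOn Q ↑S₂ (Set.Icc 1 (N - t)) := hS₂card ▸ hQbij
    have hPval : ∀ c ∈ S₁, 1 ≤ P c ∧ P c ≤ t := by
      intro c hc
      have := hPbij'.mapsTo (Finset.mem_coe.mpr hc)
      rwa [Set.mem_Icc] at this
    have hQval : ∀ c ∈ S₂, 1 ≤ Q c ∧ Q c ≤ N - t := by
      intro c hc
      have := hQbij'.mapsTo (Finset.mem_coe.mpr hc)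
      rwa [Set.mem_Icc] at this
    set T : ℕ × ℕ → ℕ :=
      fun c => if c ∈ S₁ then P c else if c ∈ Δ then N + 1 - Q (rho m c) else 0 with hTdef
    have hT1 : ∀ c ∈ S₁, T c = P c := fun c hc => by simp [hTdef, hc]
    have hT2 : ∀ c ∈ Δ \ S₁, T c = N + 1 - Q (rho m c) := by
      intro c hc
      rw [mem_sdiff] at hc
      simp [hTdef, hc.1, hc.2]
    have hTlow : ∀ c ∈ S₁, 1 ≤ T c ∧ T c ≤ t := by
      intro c hc
      rw [hT1 c hc]
      exact hPval c hc
    have hThigh : ∀ c ∈ Δ \ S₁, t < T c ∧ T c ≤ N := by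
      intro c hc
      rw [hT2 c hc]
      have := hQval _ (hRS₂ c hc)
      omega
    constructor
    · refine ⟨?_, ?_, ?_, ?_⟩
      · rw [hNΔ]
        refine ⟨?_, ?_, ?_⟩
        · intro c hc
          rw [Finset.mem_coe] at hc
          by_cases h1 : c ∈ S₁
          · have := hTlow c h1; rw [Set.mem_Icc]; omega
          · have := hThigh c (mem_sdiff.mpr ⟨hc, h1⟩); rw [Set.mem_Icc]; omega
        · intro c hc c' hc' heq
          rw [Finset.mem_coe] at hc hc'
          by_cases h1 : c ∈ S₁ <;> by_cases h2 : c' ∈ S₁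
          · rw [hT1 c h1, hT1 c' h2] at heq
            exact hPbij'.injOn (Finset.mem_coe.mpr h1) (Finset.mem_coe.mpr h2) heq
          · have b1 := hTlow c h1
            have b2 := hThigh c' (mem_sdiff.mpr ⟨hc', h2⟩)
            omega
          · have b1 := hThigh c (mem_sdiff.mpr ⟨hc, h1⟩)
            have b2 := hTlow c' h2
            omega
          · have hcR : c ∈ Δ \ S₁ := mem_sdiff.mpr ⟨hc, h1⟩
            have hc'R : c' ∈ Δ \ S₁ := mem_sdiff.mpr ⟨hc', h2⟩
            rw [hT2 c hcR, hT2 c' hc'R] at heq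
            have q1 := hQval _ (hRS₂ c hcR)
            have q2 := hQval _ (hRS₂ c' hc'R)
            have hQeq : Q (rho m c) = Q (rho m c') := by omega
            have := hQbij'.injOn (Finset.mem_coe.mpr (hRS₂ c hcR))
              (Finset.mem_coe.mpr (hRS₂ c' hc'R)) hQeq
            calc c = rho m (rho m c) := (hinvol c hc).symm
              _ = rho m (rho m c') := by rw [this]
              _ = c' := hinvol c' hc'
        · intro v hv
          rw [Set.mem_Icc] at hv
          by_cases hvt : v ≤ t
          · have hv' : v ∈ Set.Icc 1 t := by rw [Set.mem_Icc]; omega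
            obtain ⟨c, hc, rfl⟩ := hPbij'.surjOn hv'
            rw [Finset.mem_coe] at hc
            exact ⟨c, Finset.mem_coe.mpr (hS₁Δ hc), hT1 c hc⟩
          · have hv' : N + 1 - v ∈ Set.Icc 1 (N - t) := by rw [Set.mem_Icc]; omega
            obtain ⟨d, hd, hdeq⟩ := hQbij'.surjOn hv'
            rw [Finset.mem_coe] at hd
            have hdR := hS₂R d hd
            refine ⟨rho m d, Finset.mem_coe.mpr (sdiff_subset hdR), ?_⟩
            rw [hT2 _ hdR, hinvol d (hS₂Δ hd), hdeq]
            omega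
      · intro c hc
        have h1 : c ∉ S₁ := fun h => hc (hS₁Δ h)
        simp [hTdef, h1, hc]
      · rintro ⟨i, j⟩ hcΔ hc'Δ
        show T (i, j) < T (i, j + 1)
        have hcΔ' : (i, j) ∈ Δ := hcΔ
        have hc'Δ' : (i, j + 1) ∈ Δ := hc'Δ
        have hij : i ≤ j := by
          rw [hΔdef, mem_triangle] at hcΔ'; exact hcΔ'.1
        by_cases h2 : (i, j + 1) ∈ S₁
        · have h1 : (i, j) ∈ S₁ := Dd_lower_row h2 hij
          rw [hT1 _ h1, hT1 _ h2]
          exact hProw (i, j) h1 h2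
        · have hc'R : (i, j + 1) ∈ Δ \ S₁ := mem_sdiff.mpr ⟨hc'Δ', h2⟩
          by_cases h1 : (i, j) ∈ S₁
          · have b1 := hTlow _ h1
            have b2 := hThigh _ hc'R
            omega
          · have hcR : (i, j) ∈ Δ \ S₁ := mem_sdiff.mpr ⟨hcΔ', h1⟩
            have hr1 := hRS₂ _ hc'R
            have hr2 := hRS₂ _ hcR
            have hjm : j + 1 < m := by
              rw [hΔdef, mem_triangle] at hc'Δ'; exact hc'Δ'.2
            have hx : m - 1 - j = (m - 1 - (j + 1)) + 1 := by omega
            have hcell : rho m (i, j) = ((m - 1 - (j + 1)) + 1, m - 1 - i) := by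
              rw [rho_mk, hx]
            have hlt : Q (m - 1 - (j + 1), m - 1 - i) < Q ((m - 1 - (j + 1)) + 1, m - 1 - i) :=
              hQcol (m - 1 - (j + 1), m - 1 - i) hr1 (hcell ▸ hr2)
            have b1 := hQval _ hr2
            have b2 := hQval _ hr1
            rw [hT2 _ hcR, hT2 _ hc'R]
            have e1 : Q (rho m (i, j)) = Q ((m - 1 - (j + 1)) + 1, m - 1 - i) := congrArg Q hcell
            have e2 : Q (rho m (i, j + 1)) = Q (m - 1 - (j + 1), m - 1 - i) := rfl
            rw [e1] at b1 ⊢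
            rw [e2] at b2 ⊢
            omega
      · rintro ⟨i, j⟩ hcΔ hc'Δ
        show T (i, j) < T (i + 1, j)
        have hcΔ' : (i, j) ∈ Δ := hcΔ
        have hc'Δ' : (i + 1, j) ∈ Δ := hc'Δ
        by_cases h2 : (i + 1, j) ∈ S₁
        · have h1 : (i, j) ∈ S₁ := Dd_lower_col h2
          rw [hT1 _ h1, hT1 _ h2]
          exact hPcol (i, j) h1 h2
        · have hc'R : (i + 1, j) ∈ Δ \ S₁ := mem_sdiff.mpr ⟨hc'Δ', h2⟩
          by_cases h1 : (i, j) ∈ S₁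
          · have b1 := hTlow _ h1
            have b2 := hThigh _ hc'R
            omega
          · have hcR : (i, j) ∈ Δ \ S₁ := mem_sdiff.mpr ⟨hcΔ', h1⟩
            have hr1 := hRS₂ _ hc'R
            have hr2 := hRS₂ _ hcR
            have him : i + 1 ≤ j ∧ j < m := by
              rw [hΔdef, mem_triangle] at hc'Δ'; exact hc'Δ'
            have hx : m - 1 - i = (m - 1 - (i + 1)) + 1 := by omega
            have hcell : rho m (i, j) = (m - 1 - j, (m - 1 - (i + 1)) + 1) := by
              rw [rho_mk, hx]
            have hlt : Q (m - 1 - j, m - 1 - (i + 1)) < Q (m - 1 - j, (m - 1 - (i + 1)) + 1) :=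
              hQrow (m - 1 - j, m - 1 - (i + 1)) hr1 (hcell ▸ hr2)
            have b1 := hQval _ hr2
            have b2 := hQval _ hr1
            rw [hT2 _ hcR, hT2 _ hc'R]
            have e1 : Q (rho m (i, j)) = Q (m - 1 - j, (m - 1 - (i + 1)) + 1) := congrArg Q hcell
            have e2 : Q (rho m (i + 1, j)) = Q (m - 1 - j, m - 1 - (i + 1)) := rfl
            rw [e1] at b1 ⊢
            rw [e2] at b2 ⊢
            omega
    · ext c
      rw [mem_filter]
      constructor
      · rintro ⟨hcΔ, hct⟩
        by_contra h1
        have h3 := hThigh c (mem_sdiff.mpr ⟨hcΔ, h1⟩)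
        have hct' : T c ≤ t := hct
        omega
      · intro h1
        have h4 := hTlow c h1
        refine ⟨hS₁Δ h1, ?_⟩
        show T c ≤ t
        omega
  rw [← Nat.card_prod]
  apply Nat.card_congr
  refine
    { toFun := fun X => (⟨fun c => if c ∈ S₁ then X.1 c else 0, forward₁ X.1 X.2.1 X.2.2⟩,
        ⟨fun c => if c ∈ S₂ then N + 1 - X.1 (rho m c) else 0, forward₂ X.1 X.2.1 X.2.2⟩)
      invFun := fun PQ => ⟨fun c =>
          if c ∈ S₁ then PQ.1.1 c else if c ∈ Δ then N + 1 - PQ.2.1 (rho m c) else 0,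
        (backward PQ.1.1 PQ.2.1 PQ.1.2 PQ.2.2).1, (backward PQ.1.1 PQ.2.1 PQ.1.2 PQ.2.2).2⟩
      left_inv := ?_
      right_inv := ?_ }
  · rintro ⟨T, hT, hU⟩
    apply Subtype.ext
    funext c
    show (if c ∈ S₁ then (if c ∈ S₁ then T c else 0)
      else if c ∈ Δ then N + 1 - (if rho m c ∈ S₂ then N + 1 - T (rho m (rho m c)) else 0)
      else 0) = T c
    by_cases h1 : c ∈ S₁
    · simp [h1]
    · by_cases h2 : c ∈ Δ
      · have hcR : c ∈ Δ \ S₁ := mem_sdiff.mpr ⟨h2, h1⟩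
        have hr := hRS₂ c hcR
        rw [if_neg h1, if_pos h2, if_pos hr, hinvol c h2]
        have hb := hT.1.mapsTo (Finset.mem_coe.mpr h2)
        rw [Set.mem_Icc, hNΔ] at hb
        omega
      · rw [if_neg h1, if_neg h2]
        exact (hT.2.1 c h2).symm
  · rintro ⟨⟨P, hP⟩, ⟨Q, hQ⟩⟩
    have hback := backward P Q hP hQ
    apply Prod.ext
    · apply Subtype.ext
      funext c
      show (if c ∈ S₁ then
          (if c ∈ S₁ then P c else if c ∈ Δ then N + 1 - Q (rho m c) else 0) else 0) = P c
      by_cases h1 : c ∈ S₁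
      · simp [h1]
      · rw [if_neg h1]
        exact (hP.2.1 c h1).symm
    · apply Subtype.ext
      funext c
      show (if c ∈ S₂ then N + 1 -
          (if rho m c ∈ S₁ then P (rho m c)
            else if rho m c ∈ Δ then N + 1 - Q (rho m (rho m c)) else 0) else 0) = Q c
      by_cases h1 : c ∈ S₂
      · have hd := hS₂R c h1
        rw [mem_sdiff] at hd
        rw [if_pos h1, if_neg hd.2, if_pos hd.1, hinvol c (hS₂Δ h1)]
        have hb := hQ.1.mapsTo (Finset.mem_coe.mpr h1)
        rw [Set.mem_Icc, hS₂card] at hb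
        omega
      · rw [if_neg h1]
        exact (hQ.2.1 c h1).symm

end AuxSCS

/-- `∑_{λ ⊆ [m], |λ| = t} g^λ g^{λᶜ} = g^{[m]}`. -/
theorem staircase_complement_sum (m t : ℕ) (ht : t ≤ (m + 1).choose 2) :
    ∑ s ∈ (Finset.Icc 1 m).powerset.filter (fun s => s.sum id = t),
        gF s * gF (Finset.Icc 1 m \ s)
      = gF (Finset.Icc 1 m) := by
  classical
  have htN : t ≤ (Icc 1 m).sum id := by rw [sum_Icc_id]; exact ht
  set F : Finset (Finset ℕ) := (Finset.Icc 1 m).powerset.filter (fun s => s.sum id = t) with hF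
  have hmemF : ∀ s, s ∈ F ↔ s ⊆ Icc 1 m ∧ s.sum id = t := by
    intro s; rw [hF, mem_filter, mem_powerset]
  -- the extraction function
  set ex : (ℕ × ℕ → ℕ) → Finset ℕ := fun T =>
    if h : ∃ s : Finset ℕ, s ⊆ Icc 1 m ∧ s.sum id = t ∧
        (Dd (Icc 1 m)).filter (fun c => T c ≤ t) = Dd s then h.choose else ∅ with hex
  have hexspec : ∀ T : ℕ × ℕ → ℕ, IsSYT (Dd (Icc 1 m)) T →
      ex T ⊆ Icc 1 m ∧ (ex T).sum id = t ∧
        (Dd (Icc 1 m)).filter (fun c => T c ≤ t) = Dd (ex T) := by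
    intro T hT
    have h := extraction m t htN T hT
    rw [hex]
    simp only [dif_pos h]
    exact h.choose_spec
  have hexF : ∀ T : ℕ × ℕ → ℕ, IsSYT (Dd (Icc 1 m)) T → ex T ∈ F := by
    intro T hT
    rw [hmemF]
    exact ⟨(hexspec T hT).1, (hexspec T hT).2.1⟩
  have hgoal : gF (Icc 1 m) = Nat.card {T : ℕ × ℕ → ℕ // IsSYT (Dd (Icc 1 m)) T} := rfl
  rw [hgoal, nat_card_fiber_sum (fun T => IsSYT (Dd (Icc 1 m)) T) ex F hexF]
  apply Finset.sum_congr rfl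
  intro s hsF
  rw [hmemF] at hsF
  obtain ⟨hs, hsum⟩ := hsF
  have hiff : ∀ T : ℕ × ℕ → ℕ,
      (IsSYT (Dd (Icc 1 m)) T ∧ ex T = s) ↔
      (IsSYT (Dd (Icc 1 m)) T ∧ (Dd (Icc 1 m)).filter (fun c => T c ≤ t) = Dd s) := by
    intro T
    constructor
    · rintro ⟨hT, hexT⟩
      refine ⟨hT, ?_⟩
      rw [(hexspec T hT).2.2, hexT]
    · rintro ⟨hT, hfil⟩
      refine ⟨hT, ?_⟩
      apply Dd_inj (hexspec T hT).1 hs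
      rw [← (hexspec T hT).2.2, hfil]
  rw [Nat.card_congr (Equiv.subtypeEquivRight hiff),
    fiber_card m t ((Icc 1 m).sum id) rfl s hs hsum]
  rfl
end

section
/- Let m, n, t be nonnegative with t ≤ mn, let T be a SYT of rectangular shape (n^m), let T1 consist of the cells with entries at most t, and let T2 be obtained from the remaining cells by transposing and replacing each entry i by mn - i + 1. Then T1 and T2 are SYT of partition shapes λ¹ and λ², and the set {1, 2, ..., m+n} is the disjoint union of the sets of parts of λ¹ + (m, m-1, ..., 1) and of λ² + (n, n-1, ..., 1). -/
open Finset

lemma mem_shapeCells {L : List ℕ} {c : ℕ × ℕ} :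
    c ∈ shapeCells L ↔ c.1 < L.length ∧ c.2 < L.getD c.1 0 := by
  obtain ⟨a, b⟩ := c
  unfold shapeCells
  simp only [Finset.mem_biUnion, Finset.mem_range, Finset.mem_image, Prod.mk.injEq]
  constructor
  · rintro ⟨i, hi, j, hj, rfl, rfl⟩; exact ⟨hi, hj⟩
  · rintro ⟨h1, h2⟩; exact ⟨a, h1, b, h2, rfl, rfl⟩

lemma mem_rect {m n : ℕ} {c : ℕ × ℕ} :
    c ∈ shapeCells (List.replicate m n) ↔ c.1 < m ∧ c.2 < n := by
  rw [mem_shapeCells, List.length_replicate]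
  constructor
  · rintro ⟨h1, h2⟩
    refine ⟨h1, ?_⟩
    rwa [List.getD_eq_getElem?_getD, List.getElem?_replicate, if_pos h1] at h2
  · rintro ⟨h1, h2⟩
    refine ⟨h1, ?_⟩
    rwa [List.getD_eq_getElem?_getD, List.getElem?_replicate, if_pos h1]

lemma filter_range_iff {n : ℕ} (P : ℕ → Prop) [DecidablePred P]
    (hdc : ∀ a b, a ≤ b → b < n → P b → P a) (j : ℕ) :
    j ∈ (Finset.range n).filter P ↔ j < ((Finset.range n).filter P).card := by
  constructor
  · intro hj
    have hjn : j < n := Finset.mem_range.1 (Finset.mem_filter.1 hj).1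
    have hPj : P j := (Finset.mem_filter.1 hj).2
    have : Finset.range (j+1) ⊆ (Finset.range n).filter P := by
      intro a ha
      have ha' : a ≤ j := Nat.lt_succ_iff.1 (Finset.mem_range.1 ha)
      exact Finset.mem_filter.2 ⟨Finset.mem_range.2 (lt_of_le_of_lt ha' hjn),
        hdc a j ha' hjn hPj⟩
    have := Finset.card_le_card this
    simpa using this
  · intro hj
    by_contra hmem
    have hsub : (Finset.range n).filter P ⊆ Finset.range j := by
      intro b hb
      have hbn : b < n := Finset.mem_range.1 (Finset.mem_filter.1 hb).1
      have hPb : P b := (Finset.mem_filter.1 hb).2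
      by_contra hbj
      rw [Finset.mem_range, not_lt] at hbj
      exact hmem (Finset.mem_filter.2 ⟨Finset.mem_range.2 (lt_of_le_of_lt hbj hbn),
        hdc j b hbj hbn hPb⟩)
    have := Finset.card_le_card hsub
    simp at this
    omega

lemma getD_map_range (m : ℕ) (f : ℕ → ℕ) (i : ℕ) (hi : i < m) :
    (((List.range m).map f).getD i 0) = f i := by
  rw [List.getD_eq_getElem?_getD]
  simp [hi]

lemma T_row_mono {m n : ℕ} {T : ℕ × ℕ → ℕ}
    (hT : IsSYT (shapeCells (List.replicate m n)) T)
    {i : ℕ} (hi : i < m) (j' : ℕ) :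
    ∀ j, j' ≤ j → j < n → T (i, j') ≤ T (i, j) := by
  intro j
  induction j with
  | zero =>
    intro h1 _
    have : j' = 0 := by omega
    rw [this]
  | succ k ih =>
    intro h1 h2
    rcases Nat.eq_or_lt_of_le h1 with rfl | hlt
    · exact le_refl _
    · have hk : j' ≤ k := by omega
      have h3 := ih hk (by omega)
      have h4 : T (i, k) < T (i, k + 1) :=
        hT.2.2.1 (i, k) (mem_rect.2 ⟨hi, by omega⟩) (mem_rect.2 ⟨hi, h2⟩)
      omega

lemma T_col_mono {m n : ℕ} {T : ℕ × ℕ → ℕ}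
    (hT : IsSYT (shapeCells (List.replicate m n)) T)
    {j : ℕ} (hj : j < n) (i' : ℕ) :
    ∀ i, i' ≤ i → i < m → T (i', j) ≤ T (i, j) := by
  intro i
  induction i with
  | zero => intro h1 _; have : i' = 0 := by omega
            rw [this]
  | succ k ih =>
    intro h1 h2
    rcases Nat.eq_or_lt_of_le h1 with rfl | hlt
    · exact le_refl _
    · have hk : i' ≤ k := by omega
      have h3 := ih hk (by omega)
      have h4 : T (k, j) < T (k + 1, j) :=
        hT.2.2.2 (k, j) (mem_rect.2 ⟨by omega, hj⟩) (mem_rect.2 ⟨h2, hj⟩)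
      omega


/-- splitting a rectangular SYT at value `t` produces two SYT of
partition shapes `λ¹`, `λ²` with `{1,…,m+n}` the disjoint union of the parts of
`λ¹ + (m,…,1)` and `λ² + (n,…,1)`. -/
theorem rectangle_split (m n t : ℕ) (ht : t ≤ m * n)
    (T : ℕ × ℕ → ℕ) (hT : IsSYT (shapeCells (List.replicate m n)) T)
    (S1 S2 : Finset (ℕ × ℕ)) (T1 T2 : ℕ × ℕ → ℕ)
    (hS1 : S1 = (shapeCells (List.replicate m n)).filter fun c => T c ≤ t)
    (hS2 : S2 = ((shapeCells (List.replicate m n)).filter fun c => t < T c).image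
        fun c => (n - 1 - c.2, m - 1 - c.1))
    (hT1 : T1 = fun c => if c ∈ S1 then T c else 0)
    (hT2 : T2 = fun c =>
        if c ∈ S2 then m * n + 1 - T (m - 1 - c.2, n - 1 - c.1) else 0) :
    ∃ L1 L2 : List ℕ, L1.length = m ∧ L2.length = n ∧
      (∀ i j, i ≤ j → j < m → L1.getD j 0 ≤ L1.getD i 0) ∧
      (∀ i j, i ≤ j → j < n → L2.getD j 0 ≤ L2.getD i 0) ∧
      S1 = shapeCells L1 ∧ S2 = shapeCells L2 ∧
      IsSYT S1 T1 ∧ IsSYT S2 T2 ∧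
      Disjoint (((List.range m).map fun i => L1.getD i 0 + (m - i)).toFinset)
               (((List.range n).map fun i => L2.getD i 0 + (n - i)).toFinset) ∧
      (((List.range m).map fun i => L1.getD i 0 + (m - i)).toFinset) ∪
          (((List.range n).map fun i => L2.getD i 0 + (n - i)).toFinset)
        = Finset.Icc 1 (m + n) := by
  classical
  have hRcard : (shapeCells (List.replicate m n)).card = m * n := by
    have : shapeCells (List.replicate m n) = Finset.range m ×ˢ Finset.range n := by
      ext c
      rw [mem_rect, Finset.mem_product, Finset.mem_range, Finset.mem_range]
    rw [this, Finset.card_product, Finset.card_range, Finset.card_range]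
  have hbij : Set.BijOn T ↑(shapeCells (List.replicate m n)) (Set.Icc 1 (m * n)) :=
    hRcard ▸ hT.1
  have hTval : ∀ c : ℕ × ℕ, c.1 < m → c.2 < n → 1 ≤ T c ∧ T c ≤ m * n := by
    intro c h1 h2
    exact hbij.1 (Finset.mem_coe.2 (mem_rect.2 ⟨h1, h2⟩))
  have rowmono : ∀ i j' j, i < m → j' ≤ j → j < n → T (i, j') ≤ T (i, j) :=
    fun i j' j hi hjj hj => T_row_mono hT hi j' j hjj hj
  have colmono : ∀ i' i j, i' ≤ i → i < m → j < n → T (i', j) ≤ T (i, j) :=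
    fun i' i j hii hi hj => T_col_mono hT hj i' i hii hi
  set f1 : ℕ → ℕ := fun i => ((Finset.range n).filter fun j => T (i, j) ≤ t).card with hf1
  set f2 : ℕ → ℕ :=
    fun r => ((Finset.range m).filter fun s => t < T (m - 1 - s, n - 1 - r)).card with hf2
  have hmem1 : ∀ i, i < m → ∀ j, (j < f1 i ↔ j < n ∧ T (i, j) ≤ t) := by
    intro i hi j
    have hdc : ∀ a b, a ≤ b → b < n → T (i, b) ≤ t → T (i, a) ≤ t :=
      fun a b hab hb h => le_trans (rowmono i a b hi hab hb) h
    rw [hf1]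
    rw [← filter_range_iff _ hdc j, Finset.mem_filter, Finset.mem_range]
  have hmem2 : ∀ r, r < n → ∀ s, (s < f2 r ↔ s < m ∧ t < T (m - 1 - s, n - 1 - r)) := by
    intro r hr s
    have hdc : ∀ a b, a ≤ b → b < m →
        t < T (m - 1 - b, n - 1 - r) → t < T (m - 1 - a, n - 1 - r) :=
      fun a b hab hb h =>
        lt_of_lt_of_le h (colmono (m - 1 - b) (m - 1 - a) (n - 1 - r)
          (by omega) (by omega) (by omega))
    rw [hf2]
    rw [← filter_range_iff _ hdc s, Finset.mem_filter, Finset.mem_range]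
  have hf1le : ∀ i, f1 i ≤ n := by
    intro i; rw [hf1]
    simpa using Finset.card_filter_le (Finset.range n) fun j => T (i, j) ≤ t
  have hf2le : ∀ r, f2 r ≤ m := by
    intro r; rw [hf2]
    simpa using Finset.card_filter_le (Finset.range m) fun s => t < T (m - 1 - s, n - 1 - r)
  have hmono1 : ∀ i i', i ≤ i' → i' < m → f1 i' ≤ f1 i := by
    intro i i' hii hi'
    apply Finset.card_le_card
    intro a ha
    rw [Finset.mem_filter, Finset.mem_range] at ha ⊢
    exact ⟨ha.1, le_trans (colmono i i' a hii hi' ha.1) ha.2⟩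
  have hmono2 : ∀ r r', r ≤ r' → r' < n → f2 r' ≤ f2 r := by
    intro r r' hrr hr'
    apply Finset.card_le_card
    intro s hs
    rw [Finset.mem_filter, Finset.mem_range] at hs ⊢
    refine ⟨hs.1, lt_of_lt_of_le hs.2 ?_⟩
    exact rowmono (m - 1 - s) (n - 1 - r') (n - 1 - r) (by omega) (by omega) (by omega)
  refine ⟨(List.range m).map f1, (List.range n).map f2, by simp, by simp, ?_, ?_, ?_, ?_, ?_, ?_, ?_, ?_⟩
  · intro i j hij hj
    rw [getD_map_range m f1 i (by omega), getD_map_range m f1 j hj]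
    exact hmono1 i j hij hj
  · intro i j hij hj
    rw [getD_map_range n f2 i (by omega), getD_map_range n f2 j hj]
    exact hmono2 i j hij hj
  · -- S1 = shapeCells L1
    ext c
    obtain ⟨a, b⟩ := c
    rw [hS1, Finset.mem_filter, mem_rect, mem_shapeCells]
    simp only [List.length_map, List.length_range]
    constructor
    · rintro ⟨⟨ha, hb⟩, hct⟩
      refine ⟨ha, ?_⟩
      rw [getD_map_range m f1 a ha]
      exact (hmem1 a ha b).2 ⟨hb, hct⟩
    · rintro ⟨ha, hb⟩
      rw [getD_map_range m f1 a ha] at hb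
      have h := (hmem1 a ha b).1 hb
      exact ⟨⟨ha, h.1⟩, h.2⟩
  · -- S2 = shapeCells L2
    ext c
    obtain ⟨a, b⟩ := c
    rw [hS2, Finset.mem_image, mem_shapeCells]
    simp only [List.length_map, List.length_range]
    constructor
    · rintro ⟨⟨x, y⟩, hxy, heq⟩
      rw [Finset.mem_filter, mem_rect] at hxy
      obtain ⟨⟨hx, hy⟩, hxt⟩ := hxy
      have ha : a = n - 1 - y := by
        have := congrArg Prod.fst heq; simpa using this.symm
      have hb : b = m - 1 - x := by
        have := congrArg Prod.snd heq; simpa using this.symm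
      subst ha; subst hb
      refine ⟨by omega, ?_⟩
      rw [getD_map_range n f2 _ (by omega)]
      apply (hmem2 _ (by omega) _).2
      refine ⟨by omega, ?_⟩
      have e1 : m - 1 - (m - 1 - x) = x := by omega
      have e2 : n - 1 - (n - 1 - y) = y := by omega
      rw [e1, e2]
      exact hxt
    · rintro ⟨ha, hb⟩
      rw [getD_map_range n f2 a ha] at hb
      have h := (hmem2 a ha b).1 hb
      refine ⟨(m - 1 - b, n - 1 - a), ?_, ?_⟩
      · rw [Finset.mem_filter, mem_rect]
        exact ⟨⟨by omega, by omega⟩, h.2⟩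
      · have e1 : n - 1 - (n - 1 - a) = a := by omega
        have e2 : m - 1 - (m - 1 - b) = b := by omega
        simp [e1, e2]
  · -- IsSYT S1 T1
    have hsub : ↑S1 ⊆ ↑(shapeCells (List.replicate m n)) :=
      Finset.coe_subset.2 (by rw [hS1]; exact Finset.filter_subset _ _)
    have hinj : Set.InjOn T ↑S1 := hbij.2.1.mono hsub
    have hmem : ∀ c : ℕ × ℕ, c ∈ S1 ↔ (c.1 < m ∧ c.2 < n) ∧ T c ≤ t := by
      intro c; rw [hS1, Finset.mem_filter, mem_rect]
    have himg : Finset.image T S1 = Finset.Icc 1 t := by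
      ext k
      simp only [Finset.mem_image, Finset.mem_Icc]
      constructor
      · rintro ⟨c, hc, rfl⟩
        rw [hmem] at hc
        exact ⟨(hTval c hc.1.1 hc.1.2).1, hc.2⟩
      · rintro ⟨h1, h2⟩
        obtain ⟨c, hc, rfl⟩ := hbij.2.2 (⟨h1, le_trans h2 ht⟩ : k ∈ Set.Icc 1 (m * n))
        have hc' := mem_rect.1 (Finset.mem_coe.1 hc)
        exact ⟨c, (hmem c).2 ⟨hc', h2⟩, rfl⟩
    have hS1card : S1.card = t := by
      rw [← Finset.card_image_of_injOn hinj, himg, Nat.card_Icc]; omega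
    have heqOn : Set.EqOn T1 T ↑S1 := by
      intro c hc
      rw [hT1]
      simp only [Finset.mem_coe.1 hc, if_true]
    refine ⟨?_, ?_, ?_, ?_⟩
    · rw [hS1card]
      refine Set.BijOn.congr ⟨?_, hinj, ?_⟩ heqOn.symm
      · intro c hc
        have hc' := (hmem c).1 (Finset.mem_coe.1 hc)
        exact ⟨(hTval c hc'.1.1 hc'.1.2).1, hc'.2⟩
      · rw [Set.SurjOn, ← Finset.coe_image, himg, Finset.coe_Icc]
    · intro c hc
      rw [hT1]
      simp only [hc, if_false]
    · intro c hc hc'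
      rw [heqOn (Finset.mem_coe.2 hc), heqOn (Finset.mem_coe.2 hc')]
      have h1 := (hmem c).1 hc
      have h2 := (hmem _).1 hc'
      exact hT.2.2.1 c (mem_rect.2 h1.1) (mem_rect.2 h2.1)
    · intro c hc hc'
      rw [heqOn (Finset.mem_coe.2 hc), heqOn (Finset.mem_coe.2 hc')]
      have h1 := (hmem c).1 hc
      have h2 := (hmem _).1 hc'
      exact hT.2.2.2 c (mem_rect.2 h1.1) (mem_rect.2 h2.1)
  · -- IsSYT S2 T2
    have hmemc : ∀ c : ℕ × ℕ,
        c ∈ S2 ↔ c.1 < n ∧ c.2 < m ∧ t < T (m - 1 - c.2, n - 1 - c.1) := by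
      intro c
      obtain ⟨a, b⟩ := c
      rw [hS2, Finset.mem_image]
      constructor
      · rintro ⟨⟨x, y⟩, hxy, heq⟩
        rw [Finset.mem_filter, mem_rect] at hxy
        obtain ⟨⟨hx, hy⟩, hxt⟩ := hxy
        have ha : a = n - 1 - y := by
          have := congrArg Prod.fst heq; simpa using this.symm
        have hb : b = m - 1 - x := by
          have := congrArg Prod.snd heq; simpa using this.symm
        subst ha; subst hb
        have e1 : m - 1 - (m - 1 - x) = x := by omega
        have e2 : n - 1 - (n - 1 - y) = y := by omega
        refine ⟨by omega, by omega, ?_⟩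
        dsimp only
        rw [e1, e2]
        exact hxt
      · rintro ⟨h1, h2, h3⟩
        refine ⟨(m - 1 - b, n - 1 - a), ?_, ?_⟩
        · rw [Finset.mem_filter, mem_rect]
          exact ⟨⟨by omega, by omega⟩, h3⟩
        · have e1 : n - 1 - (n - 1 - a) = a := by omega
          have e2 : m - 1 - (m - 1 - b) = b := by omega
          simp [e1, e2]
    have hval2 : ∀ c ∈ S2, T2 c = m * n + 1 - T (m - 1 - c.2, n - 1 - c.1) := by
      intro c hc
      rw [hT2]
      simp only [hc, if_true]
    have hFsub : ↑((shapeCells (List.replicate m n)).filter fun c => t < T c) ⊆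
        (↑(shapeCells (List.replicate m n)) : Set (ℕ × ℕ)) :=
      Finset.coe_subset.2 (Finset.filter_subset _ _)
    have hinjF : Set.InjOn T ↑((shapeCells (List.replicate m n)).filter fun c => t < T c) :=
      hbij.2.1.mono hFsub
    have himg2 : Finset.image T ((shapeCells (List.replicate m n)).filter fun c => t < T c)
        = Finset.Icc (t + 1) (m * n) := by
      ext k
      simp only [Finset.mem_image, Finset.mem_Icc, Finset.mem_filter]
      constructor
      · rintro ⟨c, ⟨hcR, hct⟩, rfl⟩
        have hv := hbij.1 (Finset.mem_coe.2 hcR)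
        exact ⟨by omega, hv.2⟩
      · rintro ⟨h1, h2⟩
        obtain ⟨c, hc, rfl⟩ := hbij.2.2 (⟨by omega, h2⟩ : k ∈ Set.Icc 1 (m * n))
        exact ⟨c, ⟨Finset.mem_coe.1 hc, by omega⟩, rfl⟩
    have hFcard : ((shapeCells (List.replicate m n)).filter fun c => t < T c).card
        = m * n - t := by
      rw [← Finset.card_image_of_injOn hinjF, himg2, Nat.card_Icc]
      omega
    have hinjψ : Set.InjOn (fun c : ℕ × ℕ => (n - 1 - c.2, m - 1 - c.1))
        ↑((shapeCells (List.replicate m n)).filter fun c => t < T c) := by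
      rintro ⟨x1, x2⟩ hx ⟨y1, y2⟩ hy hxy
      rw [Finset.mem_coe, Finset.mem_filter, mem_rect] at hx hy
      have e1 := congrArg Prod.fst hxy
      have e2 := congrArg Prod.snd hxy
      dsimp only at e1 e2
      have : x1 = y1 ∧ x2 = y2 := by
        obtain ⟨⟨hx1, hx2⟩, -⟩ := hx
        obtain ⟨⟨hy1, hy2⟩, -⟩ := hy
        omega
      rw [this.1, this.2]
    have hS2card : S2.card = m * n - t := by
      rw [hS2, Finset.card_image_of_injOn hinjψ, hFcard]
    refine ⟨?_, ?_, ?_, ?_⟩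
    · rw [hS2card]
      refine ⟨?_, ?_, ?_⟩
      · intro c hc
        have h := (hmemc c).1 (Finset.mem_coe.1 hc)
        have hv := hTval (m - 1 - c.2, n - 1 - c.1) (by omega) (by omega)
        rw [hval2 c (Finset.mem_coe.1 hc)]
        exact ⟨by omega, by omega⟩
      · rintro ⟨x1, x2⟩ hx ⟨y1, y2⟩ hy hxy
        have h1 := (hmemc _).1 (Finset.mem_coe.1 hx)
        have h2 := (hmemc _).1 (Finset.mem_coe.1 hy)
        rw [hval2 _ (Finset.mem_coe.1 hx), hval2 _ (Finset.mem_coe.1 hy)] at hxy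
        dsimp only at h1 h2 hxy
        have hv1 := hTval (m - 1 - x2, n - 1 - x1) (by omega) (by omega)
        have hv2 := hTval (m - 1 - y2, n - 1 - y1) (by omega) (by omega)
        have hTeq : T (m - 1 - x2, n - 1 - x1) = T (m - 1 - y2, n - 1 - y1) := by omega
        have heq := hbij.2.1 (Finset.mem_coe.2 (mem_rect.2 ⟨by omega, by omega⟩))
          (Finset.mem_coe.2 (mem_rect.2 ⟨by omega, by omega⟩)) hTeq
        have f1' := congrArg Prod.fst heq
        have f2' := congrArg Prod.snd heq
        dsimp only at f1' f2'
        have : x1 = y1 ∧ x2 = y2 := by omega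
        rw [this.1, this.2]
      · intro k hk
        obtain ⟨hk1, hk2⟩ := hk
        obtain ⟨a, haR, hTa⟩ := hbij.2.2 (⟨by omega, by omega⟩ : m * n + 1 - k ∈ Set.Icc 1 (m * n))
        obtain ⟨x, y⟩ := a
        have hxy := mem_rect.1 (Finset.mem_coe.1 haR)
        dsimp only at hxy
        have e1 : m - 1 - (m - 1 - x) = x := by omega
        have e2 : n - 1 - (n - 1 - y) = y := by omega
        have hcmem : (n - 1 - y, m - 1 - x) ∈ S2 := by
          apply (hmemc _).2
          refine ⟨by omega, by omega, ?_⟩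
          dsimp only
          rw [e1, e2, hTa]
          omega
        refine ⟨(n - 1 - y, m - 1 - x), Finset.mem_coe.2 hcmem, ?_⟩
        rw [hval2 _ hcmem]
        dsimp only
        rw [e1, e2, hTa]
        omega
    · intro c hc
      rw [hT2]
      simp only [hc, if_false]
    · intro c hc hc'
      have h1 := (hmemc c).1 hc
      have h2 := (hmemc _).1 hc'
      dsimp only at h2
      have hj : n - 1 - c.1 < n := by omega
      have e : m - 1 - c.2 = (m - 1 - (c.2 + 1)) + 1 := by omega
      have hlt : T (m - 1 - (c.2 + 1), n - 1 - c.1)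
          < T ((m - 1 - (c.2 + 1)) + 1, n - 1 - c.1) :=
        hT.2.2.2 (m - 1 - (c.2 + 1), n - 1 - c.1)
          (mem_rect.2 ⟨by omega, hj⟩) (mem_rect.2 ⟨by omega, hj⟩)
      have b1 := hTval (m - 1 - c.2, n - 1 - c.1) (by omega) hj
      have b2 := hTval (m - 1 - (c.2 + 1), n - 1 - c.1) (by omega) hj
      rw [hval2 c hc, hval2 _ hc']
      dsimp only
      rw [e] at b1 ⊢
      omega
    · intro c hc hc'
      have h1 := (hmemc c).1 hc
      have h2 := (hmemc _).1 hc'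
      dsimp only at h2
      have hi : m - 1 - c.2 < m := by omega
      have e : n - 1 - c.1 = (n - 1 - (c.1 + 1)) + 1 := by omega
      have hlt : T (m - 1 - c.2, n - 1 - (c.1 + 1))
          < T (m - 1 - c.2, (n - 1 - (c.1 + 1)) + 1) :=
        hT.2.2.1 (m - 1 - c.2, n - 1 - (c.1 + 1))
          (mem_rect.2 ⟨hi, by omega⟩) (mem_rect.2 ⟨hi, by omega⟩)
      have b1 := hTval (m - 1 - c.2, n - 1 - c.1) hi (by omega)
      have b2 := hTval (m - 1 - c.2, n - 1 - (c.1 + 1)) hi (by omega)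
      rw [hval2 c hc, hval2 _ hc']
      dsimp only
      rw [e] at b1 ⊢
      omega
  · -- Disjoint
    rw [Finset.disjoint_left]
    intro k hkA hkB
    rw [List.mem_toFinset, List.mem_map] at hkA hkB
    obtain ⟨i, hi, hki⟩ := hkA
    obtain ⟨r, hr, hkr⟩ := hkB
    rw [List.mem_range] at hi hr
    rw [getD_map_range m f1 i hi] at hki
    rw [getD_map_range n f2 r hr] at hkr
    by_cases hc : T (i, n - 1 - r) ≤ t
    · have h1 : n - 1 - r < f1 i := (hmem1 i hi _).2 ⟨by omega, hc⟩
      have h2 : f2 r ≤ m - 1 - i := by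
        by_contra h
        push_neg at h
        have h' := (hmem2 r hr (m - 1 - i)).1 h
        have e : m - 1 - (m - 1 - i) = i := by omega
        rw [e] at h'
        omega
      omega
    · push_neg at hc
      have h1 : f1 i ≤ n - 1 - r := by
        by_contra h
        push_neg at h
        have h' := (hmem1 i hi (n - 1 - r)).1 h
        omega
      have h2 : m - 1 - i < f2 r := by
        apply (hmem2 r hr (m - 1 - i)).2
        refine ⟨by omega, ?_⟩
        have e : m - 1 - (m - 1 - i) = i := by omega
        rw [e]
        exact hc
      omega
  · -- Union
    have hA : ((List.range m).map fun i => (((List.range m).map f1).getD i 0 + (m - i))).toFinset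
        = (Finset.range m).image fun i => f1 i + (m - i) := by
      ext k
      simp only [List.mem_toFinset, List.mem_map, List.mem_range, Finset.mem_image,
        Finset.mem_range]
      constructor
      · rintro ⟨i, hi, rfl⟩
        exact ⟨i, hi, by rw [getD_map_range m f1 i hi]⟩
      · rintro ⟨i, hi, rfl⟩
        exact ⟨i, hi, by rw [getD_map_range m f1 i hi]⟩
    have hB : ((List.range n).map fun i => (((List.range n).map f2).getD i 0 + (n - i))).toFinset
        = (Finset.range n).image fun i => f2 i + (n - i) := by
      ext k
      simp only [List.mem_toFinset, List.mem_map, List.mem_range, Finset.mem_image,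
        Finset.mem_range]
      constructor
      · rintro ⟨i, hi, rfl⟩
        exact ⟨i, hi, by rw [getD_map_range n f2 i hi]⟩
      · rintro ⟨i, hi, rfl⟩
        exact ⟨i, hi, by rw [getD_map_range n f2 i hi]⟩
    rw [hA, hB]
    have hinjA : Set.InjOn (fun i => f1 i + (m - i)) ↑(Finset.range m) := by
      intro i hi i' hi' h
      rw [Finset.mem_coe, Finset.mem_range] at hi hi'
      by_contra hne
      rcases Nat.lt_or_ge i i' with hlt | hge
      · have := hmono1 i i' (le_of_lt hlt) hi'
        dsimp only at h
        omega
      · have hlt : i' < i := by omega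
        have := hmono1 i' i (le_of_lt hlt) hi
        dsimp only at h
        omega
    have hinjB : Set.InjOn (fun i => f2 i + (n - i)) ↑(Finset.range n) := by
      intro i hi i' hi' h
      rw [Finset.mem_coe, Finset.mem_range] at hi hi'
      by_contra hne
      rcases Nat.lt_or_ge i i' with hlt | hge
      · have := hmono2 i i' (le_of_lt hlt) hi'
        dsimp only at h
        omega
      · have hlt : i' < i := by omega
        have := hmono2 i' i (le_of_lt hlt) hi
        dsimp only at h
        omega
    have hcardA : ((Finset.range m).image fun i => f1 i + (m - i)).card = m := by
      rw [Finset.card_image_of_injOn hinjA, Finset.card_range]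
    have hcardB : ((Finset.range n).image fun i => f2 i + (n - i)).card = n := by
      rw [Finset.card_image_of_injOn hinjB, Finset.card_range]
    have hsubU : ((Finset.range m).image fun i => f1 i + (m - i)) ∪
        ((Finset.range n).image fun i => f2 i + (n - i)) ⊆ Finset.Icc 1 (m + n) := by
      intro k hk
      rw [Finset.mem_union, Finset.mem_image, Finset.mem_image] at hk
      rw [Finset.mem_Icc]
      rcases hk with ⟨i, hi, rfl⟩ | ⟨i, hi, rfl⟩
      · rw [Finset.mem_range] at hi
        have := hf1le i
        omega
      · rw [Finset.mem_range] at hi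
        have := hf2le i
        omega
    have hdisj : Disjoint ((Finset.range m).image fun i => f1 i + (m - i))
        ((Finset.range n).image fun i => f2 i + (n - i)) := by
      rw [Finset.disjoint_left]
      intro k hkA hkB
      rw [Finset.mem_image] at hkA hkB
      obtain ⟨i, hi, hki⟩ := hkA
      obtain ⟨r, hr, hkr⟩ := hkB
      rw [Finset.mem_range] at hi hr
      by_cases hc : T (i, n - 1 - r) ≤ t
      · have h1 : n - 1 - r < f1 i := (hmem1 i hi _).2 ⟨by omega, hc⟩
        have h2 : f2 r ≤ m - 1 - i := by
          by_contra h
          push_neg at h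
          have h' := (hmem2 r hr (m - 1 - i)).1 h
          have e : m - 1 - (m - 1 - i) = i := by omega
          rw [e] at h'
          omega
        omega
      · push_neg at hc
        have h1 : f1 i ≤ n - 1 - r := by
          by_contra h
          push_neg at h
          have h' := (hmem1 i hi (n - 1 - r)).1 h
          omega
        have h2 : m - 1 - i < f2 r := by
          apply (hmem2 r hr (m - 1 - i)).2
          refine ⟨by omega, ?_⟩
          have e : m - 1 - (m - 1 - i) = i := by omega
          rw [e]
          exact hc
        omega
    apply Finset.eq_of_subset_of_card_le hsubU
    rw [Finset.card_union_of_disjoint hdisj, hcardA, hcardB, Nat.card_Icc]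
    omega
end
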